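/- arXiv:2511.19503 — 11 statements merged into one kernel-verified Lean document; each statement's English description precedes it below -/
import Mathlib

section
/- Every Gauss sequence is an Euler-Gauss sequence: if an integer sequence (a_n) satisfies a_{p^r m} ≡ a_{p^{r-1} m} (mod p^r) for all primes p and all integers r, m ≥ 1, then for every n ≥ 1, the product of a_{n/d} over divisors d of n with μ(d) = 1 is congruent modulo n to the product of a_{n/d} over divisors d of n with μ(d) = -1. -/
open ArithmeticFunction

theorem stmt1 (a : ℕ → ℤ)
    (hG : ∀ p r m : ℕ, p.Prime → 1 ≤ r → 1 ≤ m →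
      (p : ℤ) ^ r ∣ a (p ^ r * m) - a (p ^ (r - 1) * m)) :
    ∀ n : ℕ, 1 ≤ n →
      (n : ℤ) ∣
        (∏ d ∈ n.divisors.filter (fun d => moebius d = 1), a (n / d)) -
        (∏ d ∈ n.divisors.filter (fun d => moebius d = -1), a (n / d)) := by
  intro n hn
  have hn0 : n ≠ 0 := by omega
  suffices h : ∀ p ∈ n.primeFactors, ((p : ℤ) ^ n.factorization p) ∣
      (∏ d ∈ n.divisors.filter (fun d => moebius d = 1), a (n / d)) -
      (∏ d ∈ n.divisors.filter (fun d => moebius d = -1), a (n / d)) by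
    have hfact : (n : ℤ) = ∏ p ∈ n.primeFactors, (p : ℤ) ^ n.factorization p := by
      conv_lhs => rw [← Nat.factorization_prod_pow_eq_self hn0]
      rw [Nat.prod_factorization_eq_prod_primeFactors]
      push_cast
      rfl
    rw [hfact]
    refine Finset.prod_dvd_of_coprime ?_ h
    intro p hp q hq hpq
    have hp' := Nat.prime_of_mem_primeFactors hp
    have hq' := Nat.prime_of_mem_primeFactors hq
    have hcp : IsCoprime (p : ℤ) (q : ℤ) :=
      Nat.isCoprime_iff_coprime.mpr ((Nat.coprime_primes hp' hq').mpr hpq)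
    exact (hcp.pow : IsCoprime _ _)
  intro p hpmem
  have hp : p.Prime := Nat.prime_of_mem_primeFactors hpmem
  have hpn : p ∣ n := Nat.dvd_of_mem_primeFactors hpmem
  set v := n.factorization p with hvdef
  have hv : 1 ≤ v := Nat.Prime.factorization_pos_of_dvd hp hn0 hpn
  have hpv : p ^ v ∣ n := Nat.ordProj_dvd n p
  have hpv0 : p ^ v ≠ 0 := pow_ne_zero _ hp.pos.ne'
  haveI : NeZero (p ^ v) := ⟨hpv0⟩
  -- key congruence
  have key : ∀ d : ℕ, d ∣ n → ¬ p ∣ d →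
      ((a (n / d) : ZMod (p ^ v)) = (a (n / (d * p)) : ZMod (p ^ v))) := by
    intro d hd hpd
    have hd0 : d ≠ 0 := by rintro rfl; exact hn0 (Nat.zero_dvd.mp hd)
    have hcop : Nat.Coprime d (p ^ v) :=
      Nat.Coprime.pow_right v ((Nat.Prime.coprime_iff_not_dvd hp).mpr hpd).symm
    have hdpv : d * p ^ v ∣ n := hcop.mul_dvd_of_dvd_of_dvd hd hpv
    obtain ⟨m, hm⟩ := hdpv
    have hm0 : 1 ≤ m := by
      rcases Nat.eq_zero_or_pos m with h0 | h0
      · exfalso; rw [h0, mul_zero] at hm; exact hn0 hm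
      · exact h0
    have h1 : n / d = p ^ v * m := by
      rw [hm, mul_assoc, Nat.mul_div_cancel_left _ (Nat.pos_of_ne_zero hd0)]
    have h2 : n / (d * p) = p ^ (v - 1) * m := by
      have hpow : p ^ v = p * p ^ (v - 1) := by
        conv_lhs => rw [show v = 1 + (v - 1) by omega]
        rw [pow_add, pow_one]
      have heq : n = (d * p) * (p ^ (v - 1) * m) := by rw [hm, hpow]; ring
      rw [heq, Nat.mul_div_cancel_left _ (Nat.mul_pos (Nat.pos_of_ne_zero hd0) hp.pos)]
    rw [h1, h2, ← sub_eq_zero, ← Int.cast_sub, ZMod.intCast_zmod_eq_zero_iff_dvd]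
    have hgauss := hG p v m hp hv hm0
    push_cast
    exact hgauss
  -- the pairing map
  set φ : ℕ → ℕ := fun d => if p ∣ d then d / p else d * p with hφ
  have hmem : ∀ ε : ℤ, ε ≠ 0 → ∀ d ∈ n.divisors.filter (fun d => moebius d = ε),
      φ d ∈ n.divisors.filter (fun d => moebius d = -ε) := by
    intro ε hε d hd
    rw [Finset.mem_filter, Nat.mem_divisors] at hd
    obtain ⟨⟨hdn, _⟩, hμ⟩ := hd
    have hsq : Squarefree d := by
      rw [← moebius_ne_zero_iff_squarefree]; rw [hμ]; exact hε
    by_cases hpd : p ∣ d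
    · obtain ⟨d', hd'⟩ := hpd
      have hdp : d / p = d' := by rw [hd', Nat.mul_div_cancel_left _ hp.pos]
      have hpd' : ¬ p ∣ d' := by
        intro hc
        have : p * p ∣ d := by rw [hd']; exact mul_dvd_mul_left p hc
        exact hp.one_lt.ne' (Nat.isUnit_iff.mp (hsq p this))
      have hcop : Nat.Coprime p d' := (Nat.Prime.coprime_iff_not_dvd hp).mpr hpd'
      have hμ' : moebius d' = -ε := by
        have := isMultiplicative_moebius.map_mul_of_coprime hcop
        rw [← hd', hμ, moebius_apply_prime hp] at this
        linarith
      have hφd : φ d = d' := by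
        simp only [hφ]
        rw [if_pos ⟨d', hd'⟩, hdp]
      rw [hφd, Finset.mem_filter, Nat.mem_divisors]
      exact ⟨⟨dvd_trans ⟨p, by rw [hd']; ring⟩ hdn, hn0⟩, hμ'⟩
    · have hφd : φ d = d * p := by simp only [hφ]; rw [if_neg hpd]
      have hcop : Nat.Coprime d p := ((Nat.Prime.coprime_iff_not_dvd hp).mpr hpd).symm
      have hdpn : d * p ∣ n := hcop.mul_dvd_of_dvd_of_dvd hdn hpn
      have hμ' : moebius (d * p) = -ε := by
        rw [isMultiplicative_moebius.map_mul_of_coprime hcop, moebius_apply_prime hp, hμ]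
        ring
      rw [hφd, Finset.mem_filter, Nat.mem_divisors]
      exact ⟨⟨hdpn, hn0⟩, hμ'⟩
  have hinv : ∀ ε : ℤ, ε ≠ 0 → ∀ d ∈ n.divisors.filter (fun d => moebius d = ε),
      φ (φ d) = d := by
    intro ε hε d hd
    rw [Finset.mem_filter, Nat.mem_divisors] at hd
    obtain ⟨⟨hdn, _⟩, hμ⟩ := hd
    have hsq : Squarefree d := by
      rw [← moebius_ne_zero_iff_squarefree]; rw [hμ]; exact hε
    by_cases hpd : p ∣ d
    · obtain ⟨d', hd'⟩ := hpd
      have hdp : d / p = d' := by rw [hd', Nat.mul_div_cancel_left _ hp.pos]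
      have hpd' : ¬ p ∣ d' := by
        intro hc
        have : p * p ∣ d := by rw [hd']; exact mul_dvd_mul_left p hc
        exact hp.one_lt.ne' (Nat.isUnit_iff.mp (hsq p this))
      have h1 : φ d = d' := by simp only [hφ]; rw [if_pos ⟨d', hd'⟩, hdp]
      rw [h1]
      simp only [hφ]
      rw [if_neg hpd', hd', mul_comm]
    · have h1 : φ d = d * p := by simp only [hφ]; rw [if_neg hpd]
      rw [h1]
      simp only [hφ]
      rw [if_pos ⟨d, mul_comm d p⟩, Nat.mul_div_cancel _ hp.pos]
  have hval : ∀ d ∈ n.divisors.filter (fun d => moebius d = (1 : ℤ)),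
      ((a (n / d) : ZMod (p ^ v)) = (a (n / φ d) : ZMod (p ^ v))) := by
    intro d hd
    rw [Finset.mem_filter, Nat.mem_divisors] at hd
    obtain ⟨⟨hdn, _⟩, hμ⟩ := hd
    have hsq : Squarefree d := by
      rw [← moebius_ne_zero_iff_squarefree]; rw [hμ]; simp
    by_cases hpd : p ∣ d
    · obtain ⟨d', hd'⟩ := hpd
      have hdp : d / p = d' := by rw [hd', Nat.mul_div_cancel_left _ hp.pos]
      have hpd' : ¬ p ∣ d' := by
        intro hc
        have : p * p ∣ d := by rw [hd']; exact mul_dvd_mul_left p hc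
        exact hp.one_lt.ne' (Nat.isUnit_iff.mp (hsq p this))
      have hd'n : d' ∣ n := dvd_trans ⟨p, by rw [hd']; ring⟩ hdn
      have hφd : φ d = d' := by simp only [hφ]; rw [if_pos ⟨d', hd'⟩, hdp]
      rw [hφd, show d = d' * p by rw [hd', mul_comm]]
      exact (key d' hd'n hpd').symm
    · have hφd : φ d = d * p := by simp only [hφ]; rw [if_neg hpd]
      rw [hφd]
      exact key d hdn hpd
  have main : (∏ d ∈ n.divisors.filter (fun d => moebius d = 1),
        (a (n / d) : ZMod (p ^ v))) =
      ∏ d ∈ n.divisors.filter (fun d => moebius d = -1),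
        (a (n / d) : ZMod (p ^ v)) := by
    refine Finset.prod_nbij' φ φ (fun d hd => hmem 1 one_ne_zero d hd) ?_
      (hinv 1 one_ne_zero) (hinv (-1) (by norm_num)) hval
    intro d hd
    have := hmem (-1) (by norm_num) d hd
    simpa using this
  have : (((∏ d ∈ n.divisors.filter (fun d => moebius d = 1), a (n / d)) -
      (∏ d ∈ n.divisors.filter (fun d => moebius d = -1), a (n / d)) : ℤ) :
        ZMod (p ^ v)) = 0 := by
    push_cast
    rw [sub_eq_zero]
    exact main
  rw [ZMod.intCast_zmod_eq_zero_iff_dvd] at this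
  push_cast at this
  exact this
end

section
/- An integer sequence (a_n) satisfies ∑_{d∣n} μ(d) a_{n/d} ≡ 0 (mod n) for all n ≥ 1 if and only if there exists an integer sequence (g_n) such that a_n = ∑_{d∣n} d·g_d for all n ≥ 1. -/
open ArithmeticFunction

theorem stmt2 (a : ℕ → ℤ) :
    (∀ n : ℕ, 1 ≤ n → (n : ℤ) ∣ ∑ d ∈ n.divisors, moebius d * a (n / d)) ↔
    ∃ g : ℕ → ℤ, ∀ n : ℕ, 1 ≤ n → a n = ∑ d ∈ n.divisors, (d : ℤ) * g d := by
  have key : ∀ f : ℕ → ℤ,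
      (∀ n > 0, ∑ d ∈ n.divisors, f d = a n) ↔
      (∀ n > 0, ∑ d ∈ n.divisors, (moebius d : ℤ) * a (n / d) = f n) := by
    intro f
    rw [ArithmeticFunction.sum_eq_iff_sum_smul_moebius_eq]
    apply forall_congr'; intro n; apply imp_congr_right; intro hn
    rw [Nat.sum_divisorsAntidiagonal (f := fun x y => (moebius x : ℤ) • a y)]
    simp [zsmul_eq_mul]
  constructor
  · intro h
    set b : ℕ → ℤ := fun n => ∑ d ∈ n.divisors, (moebius d : ℤ) * a (n / d) with hb
    refine ⟨fun n => b n / n, fun n hn => ?_⟩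
    have : ∀ m > 0, ∑ d ∈ m.divisors, (fun d : ℕ => (d : ℤ) * (b d / (d : ℤ))) d = a m :=
      (key (fun d : ℕ => (d : ℤ) * (b d / (d : ℤ)))).mpr
        (fun m hm => (Int.mul_ediv_cancel' (h m hm)).symm)
    exact (this n hn).symm
  · rintro ⟨g, hg⟩ n hn
    have := (key (fun d => (d : ℤ) * g d)).mp (fun m hm => (hg m hm).symm) n hn
    exact ⟨g n, this⟩
end

section
/- If (a_n) is an Euler-Gauss sequence (i.e., ∏_{d∣n, μ(d)=1} a_{n/d} ≡ ∏_{d∣n, μ(d)=-1} a_{n/d} (mod n) for all n ≥ 1) and gcd(a_n, n) = 1 for all n ≥ 1, then (a_n) is a Gauss sequence, i.e., ∑_{d∣n} μ(d) a_{n/d} ≡ 0 (mod n) for all n ≥ 1. -/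
open ArithmeticFunction Finset

private lemma moebius_tri (d : ℕ) :
    moebius d = 0 ∨ moebius d = 1 ∨ moebius d = -1 := by
  by_cases h : Squarefree d
  · rw [moebius_apply_of_squarefree h]
    rcases neg_one_pow_eq_or ℤ (cardFactors d) with h1 | h1 <;> simp [h1]
  · exact Or.inl (moebius_eq_zero_of_not_squarefree h)

private lemma prod_pm1 {f : ℕ → ℤ} {s : Finset ℕ} (h : ∀ d ∈ s, f d = 1 ∨ f d = -1) :
    (∏ d ∈ s, f d) = 1 ∨ (∏ d ∈ s, f d) = -1 := by
  refine Finset.prod_induction f (fun x => x = 1 ∨ x = -1) ?_ (Or.inl rfl) h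
  rintro x y (rfl | rfl) (rfl | rfl) <;> norm_num

private lemma divq {a : ℕ → ℤ} (hcop : ∀ n : ℕ, 1 ≤ n → Int.gcd (a n) n = 1)
    {k q : ℕ} (hk : 1 ≤ k) (hq : q.Prime) (h1 : (q : ℤ) ∣ a k) (h2 : q ∣ k) : False := by
  have hg : (q : ℤ) ∣ (Int.gcd (a k) k : ℤ) :=
    Int.dvd_coe_gcd h1 (Int.natCast_dvd_natCast.mpr h2)
  rw [hcop k hk] at hg
  have h3 : (q : ℤ) ≤ 1 := Int.le_of_dvd one_pos (by exact_mod_cast hg)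
  have h4 : q ≤ 1 := by exact_mod_cast h3
  have := hq.two_le
  omega

private lemma key (a : ℕ → ℤ)
    (hEG : ∀ n : ℕ, 1 ≤ n →
      (n : ℤ) ∣
        (∏ d ∈ n.divisors.filter (fun d => moebius d = 1), a (n / d)) -
        (∏ d ∈ n.divisors.filter (fun d => moebius d = -1), a (n / d)))
    (hcop : ∀ n : ℕ, 1 ≤ n → Int.gcd (a n) n = 1) :
    ∀ m : ℕ, 1 ≤ m → ∀ q : ℕ, q.Prime → ¬ (q : ℤ) ∣ a m := by
  intro m
  induction m using Nat.strong_induction_on with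
  | _ m IH =>
    intro hm q hq hqa
    by_cases hqm : q ∣ m
    · exact divq hcop hm hq hqa hqm
    have hq0 : 0 < q := hq.pos
    have hm0 : 0 < m := hm
    have hN : 1 ≤ q * m := Nat.one_le_iff_ne_zero.mpr (by positivity)
    have hEGN := hEG (q * m) hN
    -- q divides the (μ = -1)-product since a m = a ((q*m)/q) is a factor
    have hqmem : q ∈ (q * m).divisors.filter (fun d => moebius d = -1) := by
      simp only [Finset.mem_filter, Nat.mem_divisors]
      exact ⟨⟨dvd_mul_right q m, by positivity⟩, moebius_apply_prime hq⟩
    have hQ : (q : ℤ) ∣ ∏ d ∈ (q * m).divisors.filter (fun d => moebius d = -1),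
        a (q * m / d) := by
      refine dvd_trans ?_ (Finset.dvd_prod_of_mem _ hqmem)
      rw [Nat.mul_div_cancel_left m hq0]
      exact hqa
    have hPQ : (q : ℤ) ∣
        (∏ d ∈ (q * m).divisors.filter (fun d => moebius d = 1), a (q * m / d)) -
        (∏ d ∈ (q * m).divisors.filter (fun d => moebius d = -1), a (q * m / d)) := by
      refine dvd_trans ?_ hEGN
      exact_mod_cast Dvd.intro m rfl
    have hP : (q : ℤ) ∣ ∏ d ∈ (q * m).divisors.filter (fun d => moebius d = 1),
        a (q * m / d) := by
      have := hPQ.add hQ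
      rwa [sub_add_cancel] at this
    obtain ⟨d0, hd0mem, hd0⟩ := (Nat.prime_iff_prime_int.mp hq).exists_mem_finset_dvd hP
    rw [Finset.mem_filter, Nat.mem_divisors] at hd0mem
    obtain ⟨⟨hd0N, _⟩, hmu⟩ := hd0mem
    by_cases hqd0 : q ∣ d0
    · obtain ⟨e, rfl⟩ := hqd0
      have hsq : Squarefree (q * e) :=
        moebius_ne_zero_iff_squarefree.mp (by rw [hmu]; norm_num)
      have hqe : ¬ q ∣ e := by
        intro he
        have := Nat.isUnit_iff.mp (hsq q (mul_dvd_mul_left q he))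
        have := hq.two_le
        omega
      have hcop_qe : Nat.Coprime q e := (hq.coprime_iff_not_dvd).mpr hqe
      have hmue : moebius e = -1 := by
        have hmul := isMultiplicative_moebius.map_mul_of_coprime hcop_qe
        rw [hmu, moebius_apply_prime hq] at hmul
        omega
      have he1 : e ≠ 1 := by
        rintro rfl
        rw [moebius_apply_one] at hmue
        norm_num at hmue
      have hem : e ∣ m := (Nat.mul_dvd_mul_iff_left hq0).mp hd0N
      have he0 : 0 < e := Nat.pos_of_dvd_of_pos hem hm0
      have hlt : m / e < m := Nat.div_lt_self hm0 (by omega)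
      have hge : 1 ≤ m / e := (Nat.one_le_div_iff he0).mpr (Nat.le_of_dvd hm0 hem)
      have heq : q * m / (q * e) = m / e := Nat.mul_div_mul_left m e hq0
      rw [heq] at hd0
      exact IH _ hlt hge q hq hd0
    · have hd0m : d0 ∣ m :=
        (((hq.coprime_iff_not_dvd).mpr hqd0).symm).dvd_of_dvd_mul_left hd0N
      have hd00 : 0 < d0 := Nat.pos_of_dvd_of_pos hd0m hm0
      have heq : q * m / d0 = q * (m / d0) := Nat.mul_div_assoc q hd0m
      have hmd0 : 1 ≤ m / d0 := (Nat.one_le_div_iff hd00).mpr (Nat.le_of_dvd hm0 hd0m)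
      have hpos : 1 ≤ q * m / d0 := by rw [heq]; exact Nat.one_le_iff_ne_zero.mpr (by positivity)
      have hqdvd : q ∣ q * m / d0 := by rw [heq]; exact dvd_mul_right q _
      exact divq hcop hpos hq hd0 hqdvd

theorem stmt3 (a : ℕ → ℤ)
    (hEG : ∀ n : ℕ, 1 ≤ n →
      (n : ℤ) ∣
        (∏ d ∈ n.divisors.filter (fun d => moebius d = 1), a (n / d)) -
        (∏ d ∈ n.divisors.filter (fun d => moebius d = -1), a (n / d)))
    (hcop : ∀ n : ℕ, 1 ≤ n → Int.gcd (a n) n = 1) :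
    ∀ n : ℕ, 1 ≤ n → (n : ℤ) ∣ ∑ d ∈ n.divisors, moebius d * a (n / d) := by
  -- every value is ±1
  have pm1 : ∀ m : ℕ, 1 ≤ m → a m = 1 ∨ a m = -1 := by
    intro m hm
    have h1 : (a m).natAbs = 1 := by
      by_contra hne
      obtain ⟨p, hp, hpd⟩ := Nat.exists_prime_and_dvd hne
      have : (p : ℤ) ∣ a m := by
        rw [← Int.natAbs_dvd_natAbs]
        simpa using hpd
      exact key a hEG hcop m hm p hp this
    rcases Int.natAbs_eq (a m) with h | h
    · left; rw [h, h1]; rfl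
    · right; rw [h, h1]; rfl
  -- products in the hypothesis are equal for n ≥ 3
  have hPQeq : ∀ n : ℕ, 3 ≤ n →
      (∏ d ∈ n.divisors.filter (fun d => moebius d = 1), a (n / d)) =
      (∏ d ∈ n.divisors.filter (fun d => moebius d = -1), a (n / d)) := by
    intro n hn
    have hfac : ∀ s : Finset ℕ, s ⊆ n.divisors →
        (∏ d ∈ s, a (n / d)) = 1 ∨ (∏ d ∈ s, a (n / d)) = -1 := by
      intro s hs
      refine prod_pm1 ?_
      intro d hd
      have hd' := hs hd
      rw [Nat.mem_divisors] at hd'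
      exact pm1 _ ((Nat.one_le_div_iff (Nat.pos_of_dvd_of_pos hd'.1
        (Nat.pos_of_ne_zero hd'.2))).mpr (Nat.le_of_dvd (Nat.pos_of_ne_zero hd'.2) hd'.1))
    have hP := hfac _ (Finset.filter_subset (fun d => moebius d = 1) n.divisors)
    have hQ := hfac _ (Finset.filter_subset (fun d => moebius d = -1) n.divisors)
    have hd := hEG n (by omega)
    have hz : (∏ d ∈ n.divisors.filter (fun d => moebius d = 1), a (n / d)) -
        (∏ d ∈ n.divisors.filter (fun d => moebius d = -1), a (n / d)) = 0 := by
      refine Int.eq_zero_of_abs_lt_dvd hd ?_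
      rcases hP with h1 | h1 <;> rcases hQ with h2 | h2 <;> rw [h1, h2] <;>
        simp <;> omega
    linarith
  -- unit-valued version
  set u : ℕ → ℤˣ := fun n => if a n = 1 then 1 else -1 with hu_def
  have hu : ∀ m : ℕ, 1 ≤ m → ((u m : ℤˣ) : ℤ) = a m := by
    intro m hm
    rcases pm1 m hm with h | h <;> simp [hu_def, h]
  set f : ℕ → ℤˣ := fun n => ∏ x ∈ n.divisorsAntidiagonal, u x.snd ^ moebius x.fst
    with hf_def
  have hinv : ∀ n > 0, ∏ i ∈ n.divisors, f i = u n :=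
    prod_eq_iff_prod_pow_moebius_eq.mpr (fun n _ => rfl)
  -- f n = 1 for n ≥ 3
  have hf3 : ∀ n : ℕ, 3 ≤ n → f n = 1 := by
    intro n hn
    have hrw : f n = ∏ d ∈ n.divisors, u (n / d) ^ moebius d :=
      Nat.prod_divisorsAntidiagonal (fun d e => u e ^ moebius d)
    rw [hrw]
    rw [← Finset.prod_filter_mul_prod_filter_not n.divisors (fun d => moebius d = 1)]
    rw [← Finset.prod_filter_mul_prod_filter_not
      (n.divisors.filter (fun d => ¬ moebius d = 1)) (fun d => moebius d = -1)]
    have h0 : ∏ d ∈ (n.divisors.filter (fun d => ¬ moebius d = 1)).filter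
        (fun d => ¬ moebius d = -1), u (n / d) ^ moebius d = 1 := by
      refine Finset.prod_eq_one ?_
      intro d hd
      simp only [Finset.mem_filter] at hd
      have : moebius d = 0 := by
        rcases moebius_tri d with h | h | h
        · exact h
        · exact absurd h hd.1.2
        · exact absurd h hd.2
      rw [this, zpow_zero]
    rw [h0, mul_one]
    have h1 : ∏ d ∈ n.divisors.filter (fun d => moebius d = 1),
        u (n / d) ^ moebius d = ∏ d ∈ n.divisors.filter (fun d => moebius d = 1),
        u (n / d) := by
      refine Finset.prod_congr rfl ?_
      intro d hd
      rw [(Finset.mem_filter.mp hd).2, zpow_one]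
    have h2 : ∏ d ∈ (n.divisors.filter (fun d => ¬ moebius d = 1)).filter
        (fun d => moebius d = -1), u (n / d) ^ moebius d =
        (∏ d ∈ n.divisors.filter (fun d => moebius d = -1), u (n / d))⁻¹ := by
      rw [Finset.filter_filter]
      have hflt : n.divisors.filter (fun d => ¬ moebius d = 1 ∧ moebius d = -1) =
          n.divisors.filter (fun d => moebius d = -1) := by
        refine Finset.filter_congr ?_
        intro d _
        constructor
        · exact fun h => h.2
        · intro h; exact ⟨by rw [h]; norm_num, h⟩
      rw [hflt, ← Finset.prod_inv_distrib]
      refine Finset.prod_congr rfl ?_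
      intro d hd
      rw [(Finset.mem_filter.mp hd).2]
      simp
    rw [h1, h2]
    have hkey : (∏ d ∈ n.divisors.filter (fun d => moebius d = 1), u (n / d)) =
        ∏ d ∈ n.divisors.filter (fun d => moebius d = -1), u (n / d) := by
      have hdivpos : ∀ d ∈ n.divisors, 1 ≤ n / d := by
        intro d hd
        rw [Nat.mem_divisors] at hd
        exact (Nat.one_le_div_iff (Nat.pos_of_dvd_of_pos hd.1
          (Nat.pos_of_ne_zero hd.2))).mpr (Nat.le_of_dvd (Nat.pos_of_ne_zero hd.2) hd.1)
      apply Units.ext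
      rw [← Units.coeHom_apply, ← Units.coeHom_apply, map_prod, map_prod]
      have e1 : ∀ d ∈ n.divisors.filter (fun d => moebius d = 1),
          Units.coeHom ℤ (u (n / d)) = a (n / d) := fun d hd =>
        hu _ (hdivpos d (Finset.mem_filter.mp hd).1)
      have e2 : ∀ d ∈ n.divisors.filter (fun d => moebius d = -1),
          Units.coeHom ℤ (u (n / d)) = a (n / d) := fun d hd =>
        hu _ (hdivpos d (Finset.mem_filter.mp hd).1)
      rw [Finset.prod_congr rfl e1, Finset.prod_congr rfl e2]
      exact hPQeq n hn
    rw [hkey, mul_inv_cancel]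
  -- parity law for u
  have hL3u : ∀ n : ℕ, 1 ≤ n → u n = if 2 ∣ n then u 2 else u 1 := by
    have hf1 : f 1 = u 1 := by
      have := hinv 1 one_pos
      simpa [Nat.divisors_one] using this
    have hf2 : f 1 * f 2 = u 2 := by
      have h := hinv 2 (by norm_num)
      have hdiv2 : Nat.divisors 2 = {1, 2} := by decide
      rw [hdiv2] at h
      rw [Finset.prod_insert (by decide), Finset.prod_singleton] at h
      exact h
    intro n hn
    have h := hinv n hn
    rw [← h]
    by_cases h2n : 2 ∣ n
    · have hsub : ({1, 2} : Finset ℕ) ⊆ n.divisors := by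
        intro d hd
        simp only [Finset.mem_insert, Finset.mem_singleton] at hd
        rcases hd with rfl | rfl
        · exact Nat.one_mem_divisors.mpr (by omega)
        · exact Nat.mem_divisors.mpr ⟨h2n, by omega⟩
      rw [← Finset.prod_subset hsub (fun d hd hnd => hf3 d ?_)]
      · rw [Finset.prod_insert (by decide), Finset.prod_singleton, if_pos h2n, hf2]
      · simp only [Finset.mem_insert, Finset.mem_singleton] at hnd
        have := Nat.pos_of_mem_divisors hd
        omega
    · have hsub : ({1} : Finset ℕ) ⊆ n.divisors := by
        intro d hd
        simp only [Finset.mem_singleton] at hd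
        subst hd
        exact Nat.one_mem_divisors.mpr (by omega)
      rw [← Finset.prod_subset hsub (fun d hd hnd => hf3 d ?_)]
      · rw [Finset.prod_singleton, if_neg h2n, hf1]
      · simp only [Finset.mem_singleton] at hnd
        have hdpos := Nat.pos_of_mem_divisors hd
        have hddvd := (Nat.mem_divisors.mp hd).1
        rcases Nat.lt_or_ge d 3 with hd3 | hd3
        · interval_cases d
          · exact absurd rfl hnd
          · exact absurd hddvd h2n
        · exact hd3
  have hL3 : ∀ n : ℕ, 1 ≤ n → a n = if 2 ∣ n then a 2 else a 1 := by
    intro n hn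
    have := hL3u n hn
    by_cases h2n : 2 ∣ n
    · rw [if_pos h2n] at this
      rw [← hu n hn, this, hu 2 (by norm_num), if_pos h2n]
    · rw [if_neg h2n] at this
      rw [← hu n hn, this, hu 1 (by norm_num), if_neg h2n]
  -- the moebius sum over divisors
  have musum : ∀ n : ℕ, 2 ≤ n → (∑ d ∈ n.divisors, (moebius d : ℤ)) = 0 := by
    intro n hn
    have h := congrArg (fun F : ArithmeticFunction ℤ => F n) moebius_mul_coe_zeta
    simp only [mul_apply, one_apply] at h
    rw [if_neg (by omega : ¬ n = 1)] at h
    rw [Nat.sum_divisorsAntidiagonal (f := fun d e => moebius d *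
      ((ArithmeticFunction.zeta : ArithmeticFunction ℤ) e))] at h
    rw [← h]
    refine Finset.sum_congr rfl ?_
    intro d hd
    rw [Nat.mem_divisors] at hd
    have : n / d ≠ 0 := by
      have := (Nat.one_le_div_iff (Nat.pos_of_dvd_of_pos hd.1
        (Nat.pos_of_ne_zero hd.2))).mpr (Nat.le_of_dvd (Nat.pos_of_ne_zero hd.2) hd.1)
      omega
    simp [natCoe_apply, zeta_apply, this]
  -- final computation
  intro n hn
  rcases Nat.lt_or_ge n 3 with hn3 | hn3
  · interval_cases n
    · exact one_dvd _
    · have hdiv2 : Nat.divisors 2 = {1, 2} := by decide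
      rw [hdiv2, Finset.sum_insert (by decide), Finset.sum_singleton]
      rw [moebius_apply_one, moebius_apply_prime Nat.prime_two]
      norm_num
      rcases pm1 1 (by norm_num) with h1 | h1 <;> rcases pm1 2 (by norm_num) with h2 | h2 <;>
        rw [h1, h2] <;> decide
  -- n ≥ 3 : sum is zero
  have hrw : (∑ d ∈ n.divisors, moebius d * a (n / d)) =
      ∑ d ∈ n.divisors, (moebius d : ℤ) * (if 2 ∣ n / d then a 2 else a 1) := by
    refine Finset.sum_congr rfl ?_
    intro d hd
    rw [Nat.mem_divisors] at hd
    rw [hL3 (n / d) ((Nat.one_le_div_iff (Nat.pos_of_dvd_of_pos hd.1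
      (Nat.pos_of_ne_zero hd.2))).mpr (Nat.le_of_dvd (Nat.pos_of_ne_zero hd.2) hd.1))]
  rw [hrw]
  rw [← Finset.sum_filter_add_sum_filter_not n.divisors (fun d => 2 ∣ n / d)]
  have hT : (∑ d ∈ n.divisors.filter (fun d => 2 ∣ n / d), (moebius d : ℤ)) = 0 := by
    by_cases h2n : 2 ∣ n
    · have hflt : n.divisors.filter (fun d => 2 ∣ n / d) = (n / 2).divisors := by
        ext d
        simp only [Finset.mem_filter, Nat.mem_divisors]
        constructor
        · rintro ⟨⟨hdn, hn0⟩, h2nd⟩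
          refine ⟨?_, ?_⟩
          · rw [Nat.dvd_div_iff_mul_dvd h2n]
            rw [Nat.dvd_div_iff_mul_dvd hdn] at h2nd
            rwa [mul_comm] at h2nd
          · omega
        · rintro ⟨hdn2, hn20⟩
          rw [Nat.dvd_div_iff_mul_dvd h2n] at hdn2
          have hdn : d ∣ n := dvd_trans (dvd_mul_left d 2) hdn2
          refine ⟨⟨hdn, by omega⟩, ?_⟩
          rw [Nat.dvd_div_iff_mul_dvd hdn]
          rwa [mul_comm]
      rw [hflt]
      refine musum (n / 2) ?_
      omega
    · have hflt : n.divisors.filter (fun d => 2 ∣ n / d) = ∅ := by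
        refine Finset.filter_false_of_mem ?_
        intro d hd
        intro h2nd
        exact h2n (dvd_trans h2nd (Nat.div_dvd_of_dvd (Nat.mem_divisors.mp hd).1))
      rw [hflt, Finset.sum_empty]
  have hF : (∑ d ∈ n.divisors.filter (fun d => ¬ 2 ∣ n / d), (moebius d : ℤ)) = 0 := by
    have := Finset.sum_filter_add_sum_filter_not n.divisors (fun d => 2 ∣ n / d)
      (fun d => (moebius d : ℤ))
    rw [hT, zero_add] at this
    rw [this]
    exact musum n (by omega)
  have e1 : (∑ d ∈ n.divisors.filter (fun d => 2 ∣ n / d),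
      (moebius d : ℤ) * (if 2 ∣ n / d then a 2 else a 1)) = 0 := by
    have : (∑ d ∈ n.divisors.filter (fun d => 2 ∣ n / d),
        (moebius d : ℤ) * (if 2 ∣ n / d then a 2 else a 1)) =
        (∑ d ∈ n.divisors.filter (fun d => 2 ∣ n / d), (moebius d : ℤ)) * a 2 := by
      rw [Finset.sum_mul]
      refine Finset.sum_congr rfl ?_
      intro d hd
      rw [if_pos (Finset.mem_filter.mp hd).2]
    rw [this, hT, zero_mul]
  have e2 : (∑ d ∈ n.divisors.filter (fun d => ¬ 2 ∣ n / d),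
      (moebius d : ℤ) * (if 2 ∣ n / d then a 2 else a 1)) = 0 := by
    have : (∑ d ∈ n.divisors.filter (fun d => ¬ 2 ∣ n / d),
        (moebius d : ℤ) * (if 2 ∣ n / d then a 2 else a 1)) =
        (∑ d ∈ n.divisors.filter (fun d => ¬ 2 ∣ n / d), (moebius d : ℤ)) * a 1 := by
      rw [Finset.sum_mul]
      refine Finset.sum_congr rfl ?_
      intro d hd
      rw [if_neg (Finset.mem_filter.mp hd).2]
    rw [this, hF, zero_mul]
  rw [e1, e2, add_zero]
  exact dvd_zero _
end

section
/- Let (a_n) be an integer sequence such that the sequence b_n = n·a_n is an Euler sequence, i.e., b_{p^r} ≡ b_{p^{r-1}} (mod p^r) for all primes p and r ≥ 1. Then (n·a_n) is an Euler-Gauss sequence: ∏_{d∣n, μ(d)=1} (n/d)·a_{n/d} ≡ ∏_{d∣n, μ(d)=-1} (n/d)·a_{n/d} (mod n) for all n ≥ 1. -/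
open ArithmeticFunction

theorem stmt5 (a : ℕ → ℤ)
    (hE : ∀ p r : ℕ, p.Prime → 1 ≤ r →
      (p : ℤ) ^ r ∣ ((p ^ r : ℕ) : ℤ) * a (p ^ r) - ((p ^ (r - 1) : ℕ) : ℤ) * a (p ^ (r - 1))) :
    ∀ n : ℕ, 1 ≤ n →
      (n : ℤ) ∣
        (∏ d ∈ n.divisors.filter (fun d => moebius d = 1), ((n / d : ℕ) : ℤ) * a (n / d)) -
        (∏ d ∈ n.divisors.filter (fun d => moebius d = -1), ((n / d : ℕ) : ℤ) * a (n / d)) := by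
  intro n hn
  rcases eq_or_lt_of_le hn with h1 | h1
  · rw [← h1]; exact one_dvd _
  have hn0 : n ≠ 0 := by omega
  by_cases hpp : IsPrimePow n
  · -- prime power case
    obtain ⟨p, r, hp, hr, rfl⟩ := hpp
    replace hp : p.Prime := Nat.prime_iff.mpr hp
    have hf1 : (p ^ r).divisors.filter (fun d => moebius d = 1) = {1} := by
      ext d
      simp only [Finset.mem_filter, Nat.mem_divisors, Finset.mem_singleton]
      constructor
      · rintro ⟨⟨hd, -⟩, hm⟩
        obtain ⟨i, hi, rfl⟩ := (Nat.dvd_prime_pow hp).mp hd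
        rcases Nat.eq_zero_or_pos i with rfl | hi0
        · simp
        · rw [moebius_apply_prime_pow hp hi0.ne'] at hm
          split_ifs at hm <;> norm_num at hm
      · rintro rfl
        exact ⟨⟨one_dvd _, hn0⟩, moebius_apply_one⟩
    have hf2 : (p ^ r).divisors.filter (fun d => moebius d = -1) = {p} := by
      ext d
      simp only [Finset.mem_filter, Nat.mem_divisors, Finset.mem_singleton]
      constructor
      · rintro ⟨⟨hd, -⟩, hm⟩
        obtain ⟨i, hi, rfl⟩ := (Nat.dvd_prime_pow hp).mp hd
        have hone : i = 1 := by
          by_contra hne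
          rcases Nat.eq_zero_or_pos i with rfl | hi0
          · simp [moebius_apply_one] at hm
          · rw [moebius_apply_prime_pow hp hi0.ne', if_neg hne] at hm
            norm_num at hm
        rw [hone, pow_one]
      · rintro rfl
        exact ⟨⟨dvd_pow_self _ hr.ne', hn0⟩, moebius_apply_prime hp⟩
    rw [hf1, hf2, Finset.prod_singleton, Finset.prod_singleton]
    have hdiv1 : p ^ r / 1 = p ^ r := Nat.div_one _
    have hdiv2 : p ^ r / p = p ^ (r - 1) := by
      have h := Nat.pow_div hr hp.pos
      rwa [pow_one] at h
    rw [hdiv1, hdiv2]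
    exact_mod_cast hE p r hp hr
  · -- not a prime power
    have hcard : 1 < n.primeFactors.card := by
      rcases Nat.lt_or_ge n.primeFactors.card 2 with h | h
      · interval_cases h' : n.primeFactors.card
        · exfalso
          have := Nat.primeFactors_eq_empty.mp (Finset.card_eq_zero.mp h')
          omega
        · exact absurd (isPrimePow_iff_card_primeFactors_eq_one.mpr h') hpp
      · exact h
    obtain ⟨p, hpmem, q, hqmem, hpq⟩ := Finset.one_lt_card.mp hcard
    have hp := Nat.prime_of_mem_primeFactors hpmem
    have hq := Nat.prime_of_mem_primeFactors hqmem
    have hpn := Nat.dvd_of_mem_primeFactors hpmem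
    have hqn := Nat.dvd_of_mem_primeFactors hqmem
    have key : ∀ f : ℕ → ℤ, (n : ℤ) ∣ ((n / p : ℕ) : ℤ) * f (n / p) * (((n / q : ℕ) : ℤ) * f (n / q)) := by
      intro f
      have hpqn : p * q ∣ n := (Nat.Coprime.mul_dvd_of_dvd_of_dvd
        ((Nat.coprime_primes hp hq).mpr hpq) hpn hqn)
      have h1 : n / p * (n / q) = n * (n / (p * q)) := by
        rw [Nat.div_mul_div_comm hpn hqn, Nat.mul_div_assoc n hpqn]
      have h2 : (n : ℤ) ∣ ((n / p : ℕ) : ℤ) * ((n / q : ℕ) : ℤ) := by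
        exact_mod_cast Int.natCast_dvd_natCast.mpr ⟨n / (p * q), h1⟩
      have : (n : ℤ) ∣ _ := h2.mul_right (f (n / p) * f (n / q))
      convert this using 1
      ring
    apply dvd_sub
    · -- mu = 1 side: term at d = 1
      have h1mem : 1 ∈ n.divisors.filter (fun d => moebius d = 1) := by
        simp [Nat.mem_divisors, hn0, moebius_apply_one]
      refine dvd_trans ?_ (Finset.dvd_prod_of_mem _ h1mem)
      rw [Nat.div_one]
      exact dvd_mul_right _ _
    · -- mu = -1 side: terms at d = p and d = q
      set S := n.divisors.filter (fun d => moebius d = -1) with hS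
      have hpS : p ∈ S := by
        simp [hS, Nat.mem_divisors, hpn, hn0, moebius_apply_prime hp]
      have hqS : q ∈ S := by
        simp [hS, Nat.mem_divisors, hqn, hn0, moebius_apply_prime hq]
      have hsub : ({p, q} : Finset ℕ) ⊆ S := by
        intro x hx
        simp only [Finset.mem_insert, Finset.mem_singleton] at hx
        rcases hx with rfl | rfl <;> assumption
      rw [← Finset.prod_sdiff hsub, Finset.prod_pair hpq]
      exact (key a).mul_left _
end

section
/- Let n > 1 be an integer that is not squarefree. Then there is a bijection between the set of divisors d of n with μ(d) = 1 and the set of divisors d' of n with μ(d') = -1 such that corresponding divisors satisfy rad(n/d) = rad(n/d'). -/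
open ArithmeticFunction

/-- The radical (squarefree kernel) of `n`: the product of the distinct primes dividing `n`. -/
def rad (n : ℕ) : ℕ := ∏ p ∈ n.primeFactors, p

lemma rad_div_p (p a : ℕ) (hp : p.Prime) (hpa : p * p ∣ a) (ha : a ≠ 0) :
    rad (a / p) = rad a := by
  unfold rad
  congr 1
  have h1 : p ∣ a := dvd_trans (dvd_mul_left p p) hpa
  obtain ⟨b, rfl⟩ := h1
  have hb : b ≠ 0 := by rintro rfl; simp at ha
  rw [Nat.mul_div_cancel_left _ hp.pos]
  have hpb : p ∣ b := (mul_dvd_mul_iff_left (a := p) hp.ne_zero).mp hpa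
  rw [Nat.primeFactors_mul hp.ne_zero hb, hp.primeFactors]
  exact (Finset.union_eq_right.mpr (Finset.singleton_subset_iff.mpr
    (Nat.mem_primeFactors.mpr ⟨hp, hpb, hb⟩))).symm

lemma flip_lemma (n p : ℕ) (hn : n ≠ 0) (hp : p.Prime) (hpp : p * p ∣ n)
    (d : ℕ) (hd : d ∣ n) (hsq : Squarefree d) :
    (if p ∣ d then d / p else d * p) ∣ n ∧
    Squarefree (if p ∣ d then d / p else d * p) ∧
    moebius (if p ∣ d then d / p else d * p) = - moebius d ∧
    rad (n / d) = rad (n / (if p ∣ d then d / p else d * p)) := by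
  by_cases hpd : p ∣ d
  · simp only [if_pos hpd]
    obtain ⟨e, rfl⟩ := hpd
    rw [Nat.mul_div_cancel_left e hp.pos]
    have hpe : ¬ p ∣ e := fun hc => hp.not_isUnit (hsq p (mul_dvd_mul_left p hc |>.trans (dvd_refl _)))
    have hcop : Nat.Coprime p e := (Nat.Prime.coprime_iff_not_dvd hp).mpr hpe
    have he : e ∣ n := (dvd_mul_left e p).trans hd
    have he0 : e ≠ 0 := fun hc => hn (by simpa [hc] using hd)
    have hsqe : Squarefree e := hsq.squarefree_of_dvd (dvd_mul_left e p)
    have hmu : moebius (p * e) = - moebius e := by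
      rw [isMultiplicative_moebius.map_mul_of_coprime hcop, moebius_apply_prime hp]
      ring
    refine ⟨he, hsqe, by rw [hmu]; ring, ?_⟩
    have hppn : p * p ∣ n / e := by
      rw [Nat.dvd_div_iff_mul_dvd he]
      exact Nat.Coprime.mul_dvd_of_dvd_of_dvd (hcop.symm.mul_right hcop.symm) he hpp
    have hne0 : n / e ≠ 0 :=
      (Nat.div_pos (Nat.le_of_dvd (Nat.pos_of_ne_zero hn) he) (Nat.pos_of_ne_zero he0)).ne'
    rw [← rad_div_p p (n / e) hp hppn hne0, Nat.div_div_eq_div_mul, mul_comm]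
  · simp only [if_neg hpd]
    have hcop : Nat.Coprime p d := (Nat.Prime.coprime_iff_not_dvd hp).mpr hpd
    have hd0 : d ≠ 0 := fun hc => hn (by simpa [hc] using hd)
    have hdp : d * p ∣ n :=
      Nat.Coprime.mul_dvd_of_dvd_of_dvd hcop.symm hd ((dvd_mul_left p p).trans hpp)
    have hsqdp : Squarefree (d * p) := (Nat.squarefree_mul hcop.symm).mpr ⟨hsq, hp.squarefree⟩
    have hmu : moebius (d * p) = - moebius d := by
      rw [isMultiplicative_moebius.map_mul_of_coprime hcop.symm, moebius_apply_prime hp]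
      ring
    refine ⟨hdp, hsqdp, hmu, ?_⟩
    have hppn : p * p ∣ n / d := by
      rw [Nat.dvd_div_iff_mul_dvd hd]
      exact Nat.Coprime.mul_dvd_of_dvd_of_dvd (hcop.symm.mul_right hcop.symm) hd hpp
    have hne0 : n / d ≠ 0 :=
      (Nat.div_pos (Nat.le_of_dvd (Nat.pos_of_ne_zero hn) hd) (Nat.pos_of_ne_zero hd0)).ne'
    rw [← Nat.div_div_eq_div_mul, rad_div_p p (n / d) hp hppn hne0]

theorem stmt8 (n : ℕ) (hn : 1 < n) (h : ¬ Squarefree n) :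
    ∃ f : ℕ → ℕ,
      Set.BijOn f ↑(n.divisors.filter (fun d => moebius d = 1))
        ↑(n.divisors.filter (fun d => moebius d = -1)) ∧
      ∀ d ∈ n.divisors.filter (fun d => moebius d = 1), rad (n / d) = rad (n / f d) := by
  have hn0 : n ≠ 0 := by omega
  obtain ⟨p, hp, hpp⟩ : ∃ p, p.Prime ∧ p * p ∣ n := by
    by_contra hc
    push_neg at hc
    exact h (Nat.squarefree_iff_prime_squarefree.mpr fun q hq => hc q hq)
  set f : ℕ → ℕ := fun d => if p ∣ d then d / p else d * p with hf
  -- membership helpers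
  have hmemA : ∀ d, d ∈ n.divisors.filter (fun d => moebius d = 1) ↔
      d ∣ n ∧ moebius d = 1 := by
    intro d; simp [Nat.mem_divisors, hn0, and_assoc]
  have hmemB : ∀ d, d ∈ n.divisors.filter (fun d => moebius d = -1) ↔
      d ∣ n ∧ moebius d = -1 := by
    intro d; simp [Nat.mem_divisors, hn0, and_assoc]
  have key : ∀ d, d ∣ n → Squarefree d →
      f d ∣ n ∧ Squarefree (f d) ∧ moebius (f d) = - moebius d ∧
      rad (n / d) = rad (n / f d) :=
    fun d hd hsq => flip_lemma n p hn0 hp hpp d hd hsq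
  have hinv : ∀ d, Squarefree d → f (f d) = d := by
    intro d hsq
    by_cases hpd : p ∣ d
    · obtain ⟨e, rfl⟩ := hpd
      have hpe : ¬ p ∣ e := fun hc =>
        hp.not_isUnit (hsq p (mul_dvd_mul_left p hc |>.trans (dvd_refl _)))
      simp only [hf, if_pos (Dvd.intro e rfl), Nat.mul_div_cancel_left e hp.pos, if_neg hpe]
      ring
    · simp only [hf, if_neg hpd, if_pos (Dvd.intro_left d rfl),
        Nat.mul_div_cancel d hp.pos]
  refine ⟨f, ⟨?_, ?_, ?_⟩, ?_⟩
  · intro d hd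
    simp only [Finset.coe_filter, Set.mem_setOf_eq] at hd ⊢
    rw [Nat.mem_divisors] at hd ⊢
    obtain ⟨⟨hdn, _⟩, hmu⟩ := hd
    have hsq : Squarefree d := moebius_ne_zero_iff_squarefree.mp (by rw [hmu]; norm_num)
    obtain ⟨h1, _, h3, _⟩ := key d hdn hsq
    exact ⟨⟨h1, hn0⟩, by rw [h3, hmu]⟩
  · intro d1 hd1 d2 hd2 heq
    simp only [Finset.coe_filter, Set.mem_setOf_eq, Nat.mem_divisors] at hd1 hd2
    have hs1 : Squarefree d1 := moebius_ne_zero_iff_squarefree.mp (by rw [hd1.2]; norm_num)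
    have hs2 : Squarefree d2 := moebius_ne_zero_iff_squarefree.mp (by rw [hd2.2]; norm_num)
    calc d1 = f (f d1) := (hinv d1 hs1).symm
      _ = f (f d2) := by rw [heq]
      _ = d2 := hinv d2 hs2
  · intro e he
    simp only [Finset.coe_filter, Set.mem_setOf_eq, Nat.mem_divisors] at he
    obtain ⟨⟨hen, _⟩, hmu⟩ := he
    have hsq : Squarefree e := moebius_ne_zero_iff_squarefree.mp (by rw [hmu]; norm_num)
    obtain ⟨h1, h2, h3, _⟩ := key e hen hsq
    refine ⟨f e, ?_, hinv e hsq⟩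
    simp only [Finset.coe_filter, Set.mem_setOf_eq, Nat.mem_divisors]
    exact ⟨⟨h1, hn0⟩, by rw [h3, hmu]; ring⟩
  · intro d hd
    rw [Finset.mem_filter, Nat.mem_divisors] at hd
    obtain ⟨⟨hdn, _⟩, hmu⟩ := hd
    have hsq : Squarefree d := moebius_ne_zero_iff_squarefree.mp (by rw [hmu]; norm_num)
    exact (key d hdn hsq).2.2.2
end

section
/- The smallest-prime-factor sequence, defined by s_1 = 0 and s_n = smallest prime factor of n for n > 1, is an Euler-Gauss sequence: for all n ≥ 1, ∏_{d∣n, μ(d)=1} s_{n/d} ≡ ∏_{d∣n, μ(d)=-1} s_{n/d} (mod n). -/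
open ArithmeticFunction

/-- The smallest-prime-factor sequence, with `spf 1 = 0`. -/
def spf (n : ℕ) : ℕ := if n = 1 then 0 else n.minFac

lemma spf_eq {n q : ℕ} (h1 : 1 < n) (hq : q ∣ n) (hpq : n.minFac ∣ q) :
    spf q = n.minFac := by
  have hp : n.minFac.Prime := Nat.minFac_prime (by omega)
  have hq0 : q ≠ 0 := by
    rintro rfl; exact absurd (Nat.eq_zero_of_zero_dvd hq) (by omega)
  have hq1 : q ≠ 1 := by
    rintro rfl; exact hp.one_lt.ne' (Nat.dvd_one.mp hpq)
  rw [spf, if_neg hq1]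
  have h2 : q.minFac ≤ n.minFac := Nat.minFac_le_of_dvd hp.two_le hpq
  have h3 : n.minFac ≤ q.minFac :=
    Nat.minFac_le_of_dvd (Nat.minFac_prime hq1).two_le (q.minFac_dvd.trans hq)
  omega

lemma decomp {p k m : ℕ} (hp : p.Prime) (hpm : ¬ p ∣ m) (hm0 : m ≠ 0) (hk : 1 ≤ k)
    (ε : ℤ) (hε : ε ≠ 0) :
    ((p ^ k * m).divisors.filter (fun d => moebius d = ε)) =
      (m.divisors.filter (fun d => moebius d = ε)) ∪
        (m.divisors.filter (fun d => moebius d = -ε)).image (fun e => p * e) := by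
  have hn0 : p ^ k * m ≠ 0 := mul_ne_zero (pow_ne_zero _ hp.pos.ne') hm0
  ext d
  simp only [Finset.mem_filter, Nat.mem_divisors, Finset.mem_union, Finset.mem_image]
  constructor
  · rintro ⟨⟨hdn, -⟩, hμ⟩
    have hsq : Squarefree d := moebius_ne_zero_iff_squarefree.mp (by rw [hμ]; exact hε)
    by_cases hpd : p ∣ d
    · obtain ⟨e, rfl⟩ := hpd
      right
      have hpe : ¬ p ∣ e := by
        intro h
        exact hp.one_lt.ne' (Nat.isUnit_iff.mp (hsq p (mul_dvd_mul_left p h)) ▸ rfl)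
      have hcop : Nat.Coprime p e := (hp.coprime_iff_not_dvd).mpr hpe
      refine ⟨e, ⟨⟨?_, hm0⟩, ?_⟩, rfl⟩
      · exact (Nat.Coprime.pow_left k hcop).symm.dvd_of_dvd_mul_left
          ((dvd_mul_left e p).trans hdn)
      · have := isMultiplicative_moebius.map_mul_of_coprime hcop
        rw [moebius_apply_prime hp] at this
        rw [this] at hμ
        linarith
    · left
      have hcop : Nat.Coprime d (p ^ k) :=
        Nat.Coprime.pow_right k ((hp.coprime_iff_not_dvd).mpr hpd).symm
      exact ⟨⟨hcop.dvd_of_dvd_mul_left hdn, hm0⟩, hμ⟩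
  · rintro (⟨⟨he, -⟩, hμ⟩ | ⟨e, ⟨⟨he, -⟩, hμ⟩, rfl⟩)
    · exact ⟨⟨he.trans (dvd_mul_left m _), hn0⟩, hμ⟩
    · have hpe : ¬ p ∣ e := fun h => hpm (h.trans he)
      have hcop : Nat.Coprime p e := (hp.coprime_iff_not_dvd).mpr hpe
      refine ⟨⟨mul_dvd_mul (dvd_pow_self p (by omega)) he, hn0⟩, ?_⟩
      have hmul := isMultiplicative_moebius.map_mul_of_coprime hcop
      rw [moebius_apply_prime hp, hμ] at hmul
      linarith

lemma card_eq {m : ℕ} (hm : 1 < m) :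
    (m.divisors.filter (fun d => moebius d = 1)).card =
      (m.divisors.filter (fun d => moebius d = -1)).card := by
  have hsum : (∑ d ∈ m.divisors, moebius d) = 0 := by
    have h2 := congrArg (fun f : ArithmeticFunction ℤ => f m) moebius_mul_coe_zeta
    simp only [coe_mul_zeta_apply, one_apply] at h2
    rw [h2, if_neg hm.ne']
  have key : ∀ d ∈ m.divisors, moebius d =
      (if moebius d = 1 then (1 : ℤ) else 0) - (if moebius d = -1 then 1 else 0) := by
    intro d _
    by_cases h1 : moebius d = 1
    · simp [h1]
    · by_cases h2 : moebius d = -1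
      · simp [h1, h2]
      · have h0 : moebius d = 0 := by
          by_contra h
          rcases moebius_ne_zero_iff_eq_or.mp h with h' | h' <;> simp_all
        simp [h0, h1, h2]
  rw [Finset.sum_congr rfl key, Finset.sum_sub_distrib, Finset.sum_boole, Finset.sum_boole,
    sub_eq_zero] at hsum
  exact_mod_cast hsum

theorem stmt10 :
    ∀ n : ℕ, 1 ≤ n →
      (n : ℤ) ∣
        (∏ d ∈ n.divisors.filter (fun d => moebius d = 1), (spf (n / d) : ℤ)) -
        (∏ d ∈ n.divisors.filter (fun d => moebius d = -1), (spf (n / d) : ℤ)) := by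
  intro n
  induction n using Nat.strong_induction_on with
  | _ n IH =>
  intro hn
  rcases eq_or_lt_of_le hn with h1 | h1
  · simp [← h1]
  have hn0 : n ≠ 0 := by omega
  have hp : n.minFac.Prime := Nat.minFac_prime (by omega)
  obtain ⟨p, k, m, hpd, hk, hpm, hnm⟩ :
      ∃ p k m, p = n.minFac ∧ 1 ≤ k ∧ ¬ p ∣ m ∧ p ^ k * m = n :=
    ⟨n.minFac, n.factorization n.minFac, n / n.minFac ^ n.factorization n.minFac, rfl,
      hp.factorization_pos_of_dvd hn0 n.minFac_dvd,
      Nat.not_dvd_ordCompl hp hn0,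
      Nat.ordProj_mul_ordCompl_eq_self n n.minFac⟩
  rw [← hpd] at hp
  have hm0 : m ≠ 0 := by rintro rfl; simp at hnm; omega
  have hmdvd : m ∣ n := Dvd.intro_left _ hnm
  have hmn : m < n := by
    rcases lt_or_eq_of_le (Nat.le_of_dvd (by omega) hmdvd) with h | h
    · exact h
    · exact absurd (h ▸ (hpd ▸ n.minFac_dvd)) hpm
  -- decomposition of the filtered divisor sets
  have hdec : ∀ ε : ℤ, ε ≠ 0 → n.divisors.filter (fun d => moebius d = ε) =
      (m.divisors.filter (fun d => moebius d = ε)) ∪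
        (m.divisors.filter (fun d => moebius d = -ε)).image (fun e => p * e) := by
    intro ε hε
    conv_lhs => rw [← hnm]
    exact decomp hp hpm hm0 hk ε hε
  have hdis : ∀ ε : ℤ, Disjoint (m.divisors.filter (fun d => moebius d = ε))
      ((m.divisors.filter (fun d => moebius d = -ε)).image (fun e => p * e)) := by
    intro ε
    rw [Finset.disjoint_left]
    intro d hd hd2
    obtain ⟨e, -, rfl⟩ := Finset.mem_image.mp hd2
    exact hpm ((dvd_mul_right p e).trans
      (Nat.dvd_of_mem_divisors (Finset.mem_of_mem_filter _ hd)))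
  have hprod : ∀ ε : ℤ, ε ≠ 0 →
      ∏ d ∈ n.divisors.filter (fun d => moebius d = ε), (spf (n / d) : ℤ) =
        (∏ e ∈ m.divisors.filter (fun d => moebius d = ε), (spf (n / e) : ℤ)) *
          ∏ e ∈ m.divisors.filter (fun d => moebius d = -ε), (spf (n / (p * e)) : ℤ) := by
    intro ε hε
    rw [hdec ε hε, Finset.prod_union (hdis ε), Finset.prod_image
      (fun a _ b _ h => Nat.eq_of_mul_eq_mul_left hp.pos h)]
  have hprod1 := hprod 1 one_ne_zero
  have hprodm1 := hprod (-1) (by norm_num)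
  simp only [neg_neg] at hprodm1
  -- each spf (n / e) equals p
  have hv1 : ∀ e ∈ m.divisors, (spf (n / e) : ℤ) = (p : ℤ) := by
    intro e he
    have he' : e ∣ m := Nat.dvd_of_mem_divisors he
    have hen : e ∣ n := he'.trans hmdvd
    have hpen : p * e ∣ n := by
      rw [← hnm]; exact mul_dvd_mul (dvd_pow_self p (by omega)) he'
    have hdvd : p ∣ n / e := (Nat.dvd_div_iff_mul_dvd hen).mpr (by rw [mul_comm]; exact hpen)
    rw [spf_eq h1 (Nat.div_dvd_of_dvd hen) (hpd ▸ hdvd), hpd]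
  have hX : ∀ ε : ℤ, ∏ e ∈ m.divisors.filter (fun d => moebius d = ε), (spf (n / e) : ℤ)
      = (p : ℤ) ^ (m.divisors.filter (fun d => moebius d = ε)).card := by
    intro ε
    rw [Finset.prod_congr rfl (fun e he => hv1 e (Finset.mem_of_mem_filter _ he)),
      Finset.prod_const]
  rcases Nat.lt_or_ge k 2 with hk2 | hk2
  · -- k = 1
    obtain rfl : k = 1 := by omega
    rw [pow_one] at hnm
    have hYk1 : ∀ e ∈ m.divisors, n / (p * e) = m / e := by
      intro e he
      rw [← hnm, Nat.mul_div_mul_left _ _ hp.pos]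
    rcases eq_or_lt_of_le (Nat.one_le_iff_ne_zero.mpr hm0) with hm1 | hm1
    · -- m = 1, n = p prime
      obtain rfl : m = 1 := hm1.symm
      rw [mul_one] at hnm
      rw [hprod1, hprodm1]
      simp only [Nat.divisors_one, Finset.filter_singleton, moebius_apply_one]
      norm_num
      have h2 : n / p = 1 := by rw [hnm]; exact Nat.div_self (by omega)
      have h3 : spf n = n := by
        rw [spf, if_neg (by omega : ¬ n = 1), ← hpd]
        exact hnm
      rw [h2, h3]
      simp [spf]
    · -- m > 1 : use induction hypothesis
      have hab := card_eq hm1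
      have hIH := IH m hmn (by omega)
      have hY : ∀ ε : ℤ,
          ∏ e ∈ m.divisors.filter (fun d => moebius d = ε), (spf (n / (p * e)) : ℤ)
            = ∏ e ∈ m.divisors.filter (fun d => moebius d = ε), (spf (m / e) : ℤ) := by
        intro ε
        exact Finset.prod_congr rfl fun e he => by
          rw [hYk1 e (Finset.mem_of_mem_filter _ he)]
      rw [hprod1, hprodm1, hY 1, hY (-1), hX 1, hX (-1), hab, ← mul_sub]
      have hb1 : (m.divisors.filter (fun d => moebius d = -1)).card ≠ 0 := by
        rw [← hab]
        refine Finset.card_ne_zero_of_mem (Finset.mem_filter.mpr ⟨?_, moebius_apply_one⟩)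
        exact Nat.one_mem_divisors.mpr hm0
      have hneq : (n : ℤ) = (p : ℤ) * (m : ℤ) := by exact_mod_cast hnm.symm
      rw [hneq]
      exact mul_dvd_mul (dvd_pow_self _ hb1) (dvd_sub_comm.mp hIH)
  · -- k ≥ 2
    have hv2 : ∀ e ∈ m.divisors, (spf (n / (p * e)) : ℤ) = (p : ℤ) := by
      intro e he
      have he' : e ∣ m := Nat.dvd_of_mem_divisors he
      have hpen : p * e ∣ n := by
        rw [← hnm]; exact mul_dvd_mul (dvd_pow_self p (by omega)) he'
      have hppe : p * (p * e) ∣ n := by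
        rw [← hnm, ← mul_assoc]
        exact mul_dvd_mul (by rw [← pow_two]; exact pow_dvd_pow p hk2) he'
      have hdvd : p ∣ n / (p * e) := (Nat.dvd_div_iff_mul_dvd hpen).mpr (by rw [mul_comm]; exact hppe)
      rw [spf_eq h1 (Nat.div_dvd_of_dvd hpen) (hpd ▸ hdvd), hpd]
    have hY : ∀ ε : ℤ,
        ∏ e ∈ m.divisors.filter (fun d => moebius d = ε), (spf (n / (p * e)) : ℤ)
          = (p : ℤ) ^ (m.divisors.filter (fun d => moebius d = ε)).card := by
      intro ε
      rw [Finset.prod_congr rfl (fun e he => hv2 e (Finset.mem_of_mem_filter _ he)),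
        Finset.prod_const]
    rw [hprod1, hprodm1, hX 1, hX (-1), hY 1, hY (-1), mul_comm, sub_self]
    exact dvd_zero _
end

section
/- The greatest-prime-factor sequence, defined by g_1 = 0 and g_n = largest prime factor of n for n > 1, is an Euler-Gauss sequence: for all n ≥ 1, ∏_{d∣n, μ(d)=1} g_{n/d} ≡ ∏_{d∣n, μ(d)=-1} g_{n/d} (mod n). -/
open ArithmeticFunction
open scoped ArithmeticFunction.Moebius

/-- The greatest-prime-factor sequence, with `gpf 1 = 0`. -/
def gpf (n : ℕ) : ℕ := if n = 1 then 0 else n.primeFactors.sup _root_.id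

lemma le_gpf {n q : ℕ} (hq : q ∈ n.primeFactors) : q ≤ gpf n := by
  have hn : n ≠ 1 := by rintro rfl; simp at hq
  rw [gpf, if_neg hn]
  exact Finset.le_sup (f := _root_.id) hq

lemma gpf_mem {n : ℕ} (hn : 2 ≤ n) : gpf n ∈ n.primeFactors := by
  have hne : n.primeFactors.Nonempty := Nat.nonempty_primeFactors.2 hn
  have h1 : n ≠ 1 := by omega
  rw [gpf, if_neg h1, ← Finset.sup'_eq_sup hne]
  exact n.primeFactors.max'_mem hne

-- gpf k = p when p | k, k | n, and p bounds all prime factors of n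
lemma gpf_eq {p k n : ℕ} (hp : p.Prime) (hk : k ∣ n) (hn : n ≠ 0)
    (hmax : ∀ q ∈ n.primeFactors, q ≤ p) (hpk : p ∣ k) : gpf k = p := by
  have hk0 : k ≠ 0 := by rintro rfl; exact hn (Nat.zero_dvd.mp hk)
  have hk1 : k ≠ 1 := by rintro rfl; exact hp.one_lt.ne' (Nat.dvd_one.mp hpk)
  rw [gpf, if_neg hk1]
  refine le_antisymm (Finset.sup_le fun q hq => ?_) ?_
  · rw [Nat.mem_primeFactors] at hq
    exact hmax q (Nat.mem_primeFactors.2 ⟨hq.1, hq.2.1.trans hk, hn⟩)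
  · exact Finset.le_sup (f := _root_.id) (Nat.mem_primeFactors.2 ⟨hp, hpk, hk0⟩)

lemma moebius_trichotomy (d : ℕ) : μ d = 1 ∨ μ d = -1 ∨ μ d = 0 := by
  by_cases h : Squarefree d
  · rw [moebius_apply_of_squarefree h]
    rcases Nat.even_or_odd (ArithmeticFunction.cardFactors d) with he | ho
    · left; exact he.neg_one_pow
    · right; left; exact ho.neg_one_pow
  · right; right; exact moebius_eq_zero_of_not_squarefree h

lemma sum_moebius_eq_zero {n : ℕ} (hn : n ≠ 1) : ∑ d ∈ n.divisors, μ d = 0 := by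
  have := coe_mul_zeta_apply (f := (μ : ArithmeticFunction ℤ)) (x := n)
  rw [moebius_mul_coe_zeta] at this
  rw [← this, one_apply, if_neg hn]

lemma card_filter_eq {n : ℕ} (hn : n ≠ 1) :
    (n.divisors.filter fun d => μ d = 1).card =
    (n.divisors.filter fun d => μ d = -1).card := by
  have h0 := sum_moebius_eq_zero hn
  have hsplit : ∑ d ∈ n.divisors, μ d =
      ((n.divisors.filter fun d => μ d = 1).card : ℤ) -
      ((n.divisors.filter fun d => μ d = -1).card : ℤ) := by
    rw [← Finset.sum_filter_add_sum_filter_not n.divisors (fun d => μ d = 1)]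
    have h1 : ∑ d ∈ n.divisors.filter (fun d => μ d = 1), μ d =
        ((n.divisors.filter fun d => μ d = 1).card : ℤ) := by
      rw [Finset.sum_congr rfl (fun d hd => (Finset.mem_filter.mp hd).2)]
      simp
    have h2 : ∑ d ∈ n.divisors.filter (fun d => ¬ μ d = 1), μ d =
        -((n.divisors.filter fun d => μ d = -1).card : ℤ) := by
      rw [← Finset.sum_filter_add_sum_filter_not
        (n.divisors.filter (fun d => ¬ μ d = 1)) (fun d => μ d = -1)]
      rw [Finset.filter_filter, Finset.filter_filter]
      have h3 : ∑ d ∈ n.divisors.filter (fun d => ¬ μ d = 1 ∧ μ d = -1), μ d =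
          -((n.divisors.filter fun d => μ d = -1).card : ℤ) := by
        have : n.divisors.filter (fun d => ¬ μ d = 1 ∧ μ d = -1) =
            n.divisors.filter (fun d => μ d = -1) := by
          apply Finset.filter_congr; intro d _
          constructor
          · exact fun h => h.2
          · intro h; exact ⟨by rw [h]; decide, h⟩
        rw [this, Finset.sum_congr rfl (fun d hd => (Finset.mem_filter.mp hd).2)]
        simp
      have h4 : ∑ d ∈ n.divisors.filter (fun d => ¬ μ d = 1 ∧ ¬ μ d = -1), μ d = 0 := by
        apply Finset.sum_eq_zero; intro d hd
        rcases moebius_trichotomy d with h | h | h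
        · exact absurd h (Finset.mem_filter.mp hd).2.1
        · exact absurd h (Finset.mem_filter.mp hd).2.2
        · exact h
      rw [h3, h4, add_zero]
    rw [h1, h2]; ring
  rw [hsplit] at h0
  exact_mod_cast sub_eq_zero.mp h0

-- Split lemma: for n = p * m with p prime not dividing m
lemma prod_split {p m : ℕ} (hp : p.Prime) (hm0 : m ≠ 0) (hpm : ¬ p ∣ m)
    (hmax : ∀ q ∈ (p * m).primeFactors, q ≤ p) (ε ε' : ℤ) (hεε' : ε' = -ε)
    (hε : ε = 1 ∨ ε = -1) :
    (∏ d ∈ (p * m).divisors.filter (fun d => μ d = ε), (gpf (p * m / d) : ℤ)) =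
    (∏ d ∈ m.divisors.filter (fun d => μ d = ε'), (gpf (m / d) : ℤ)) *
      (p : ℤ) ^ (m.divisors.filter (fun d => μ d = ε)).card := by
  have hn0 : p * m ≠ 0 := mul_ne_zero hp.pos.ne' hm0
  rw [← Finset.prod_filter_mul_prod_filter_not
    ((p * m).divisors.filter fun d => μ d = ε) (fun d => p ∣ d), Finset.filter_filter,
    Finset.filter_filter]
  congr 1
  · -- part with p ∣ d : bijection with divisors of m having μ = ε'
    refine Finset.prod_nbij' (fun d => d / p) (fun d' => p * d') ?_ ?_ ?_ ?_ ?_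
    · intro d hd
      obtain ⟨hdd, hμ, hpd⟩ := Finset.mem_filter.mp hd
      have hdn : d ∣ p * m := (Nat.mem_divisors.mp hdd).1
      have hsq : Squarefree d := moebius_ne_zero_iff_squarefree.mp
        (by rcases hε with h | h <;> simp [hμ, h])
      obtain ⟨e, rfl⟩ := hpd
      have hep : ¬ p ∣ e := fun h => hp.one_lt.ne'
        (Nat.isUnit_iff.mp (hsq p (mul_dvd_mul_left p h)))
      have hem : e ∣ m := (mul_dvd_mul_iff_left hp.pos.ne').mp hdn
      have hcop : Nat.Coprime p e := (hp.coprime_iff_not_dvd).2 hep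
      have hμe : μ e = ε' := by
        have := isMultiplicative_moebius.map_mul_of_coprime hcop
        rw [moebius_apply_prime hp] at this
        rw [hεε']; rw [this] at hμ; linarith
      show p * e / p ∈ Finset.filter (fun d => μ d = ε') m.divisors
      rw [Nat.mul_div_cancel_left e hp.pos]
      exact Finset.mem_filter.mpr ⟨Nat.mem_divisors.mpr ⟨hem, hm0⟩, hμe⟩
    · intro d' hd'
      obtain ⟨hdd, hμ⟩ := Finset.mem_filter.mp hd'
      have hdm : d' ∣ m := (Nat.mem_divisors.mp hdd).1
      have hpd' : ¬ p ∣ d' := fun h => hpm (h.trans hdm)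
      have hcop : Nat.Coprime p d' := (hp.coprime_iff_not_dvd).2 hpd'
      have hμpd : μ (p * d') = ε := by
        have := isMultiplicative_moebius.map_mul_of_coprime hcop
        rw [moebius_apply_prime hp, hμ, hεε'] at this
        rw [this]; ring
      exact Finset.mem_filter.mpr ⟨Nat.mem_divisors.mpr
        ⟨mul_dvd_mul_left p hdm, hn0⟩, hμpd, Dvd.intro d' rfl⟩
    · intro d hd
      obtain ⟨-, -, hpd⟩ := Finset.mem_filter.mp hd
      exact Nat.mul_div_cancel' hpd
    · intro d' _
      exact Nat.mul_div_cancel_left d' hp.pos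
    · intro d hd
      obtain ⟨-, -, hpd⟩ := Finset.mem_filter.mp hd
      obtain ⟨e, rfl⟩ := hpd
      show (gpf (p * m / (p * e)) : ℤ) = (gpf (m / (p * e / p)) : ℤ)
      rw [Nat.mul_div_cancel_left e hp.pos, Nat.mul_div_mul_left m e hp.pos]
  · -- part with ¬ p ∣ d : all factors equal p
    have hset : (p * m).divisors.filter (fun d => μ d = ε ∧ ¬ p ∣ d) =
        m.divisors.filter (fun d => μ d = ε) := by
      ext d
      simp only [Finset.mem_filter, Nat.mem_divisors]
      constructor
      · rintro ⟨⟨hdn, -⟩, hμ, hpd⟩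
        exact ⟨⟨(((hp.coprime_iff_not_dvd).2 hpd).symm).dvd_of_dvd_mul_left hdn, hm0⟩, hμ⟩
      · rintro ⟨⟨hdm, -⟩, hμ⟩
        exact ⟨⟨hdm.mul_left p, hn0⟩, hμ, fun h => hpm (h.trans hdm)⟩
    have hval : ∀ d ∈ (p * m).divisors.filter (fun d => μ d = ε ∧ ¬ p ∣ d),
        (gpf (p * m / d) : ℤ) = (p : ℤ) := by
      intro d hd
      obtain ⟨hdd, hμ, hpd⟩ := Finset.mem_filter.mp hd
      have hdn : d ∣ p * m := (Nat.mem_divisors.mp hdd).1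
      have hdm : d ∣ m := (((hp.coprime_iff_not_dvd).2 hpd).symm).dvd_of_dvd_mul_left hdn
      have hpdvd : p ∣ p * m / d := by
        rw [Nat.mul_div_assoc p hdm]
        exact Dvd.intro (m / d) rfl
      exact_mod_cast congrArg (Nat.cast (R := ℤ))
        (gpf_eq hp (Nat.div_dvd_of_dvd hdn) hn0 hmax hpdvd)
    rw [Finset.prod_congr rfl hval, Finset.prod_const, hset]

theorem stmt11 :
    ∀ n : ℕ, 1 ≤ n →
      (n : ℤ) ∣
        (∏ d ∈ n.divisors.filter (fun d => moebius d = 1), (gpf (n / d) : ℤ)) -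
        (∏ d ∈ n.divisors.filter (fun d => moebius d = -1), (gpf (n / d) : ℤ)) := by
  intro n
  induction n using Nat.strong_induction_on with
  | _ n ih =>
  intro hn
  rcases eq_or_lt_of_le hn with h1 | hlt
  · rw [← h1]
    simpa using one_dvd _
  · -- n ≥ 2
    have hn0 : n ≠ 0 := by omega
    have hn1 : n ≠ 1 := by omega
    have hpmem := gpf_mem hlt
    set p := gpf n with hpdef
    have hp : p.Prime := Nat.prime_of_mem_primeFactors hpmem
    have hpn : p ∣ n := Nat.dvd_of_mem_primeFactors hpmem
    have hmax : ∀ q ∈ n.primeFactors, q ≤ p := fun q hq => le_gpf hq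
    by_cases h2 : p ^ 2 ∣ n
    · -- every squarefree divisor leaves a multiple of p
      have key : ∀ ε : ℤ, ε = 1 ∨ ε = -1 →
          (∏ d ∈ n.divisors.filter (fun d => μ d = ε), (gpf (n / d) : ℤ)) =
          (p : ℤ) ^ (n.divisors.filter (fun d => μ d = ε)).card := by
        intro ε hε
        rw [← Finset.prod_const]
        apply Finset.prod_congr rfl
        intro d hd
        obtain ⟨hdd, hμ⟩ := Finset.mem_filter.mp hd
        have hdn : d ∣ n := (Nat.mem_divisors.mp hdd).1
        have hsq : Squarefree d := moebius_ne_zero_iff_squarefree.mp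
          (by rcases hε with h | h <;> simp [hμ, h])
        have hpdvd : p ∣ n / d := by
          by_contra hnot
          have hcop : Nat.Coprime (p ^ 2) (n / d) :=
            ((hp.coprime_iff_not_dvd).2 hnot).pow_left 2
          have hdvd : p ^ 2 ∣ d * (n / d) := by
            rwa [Nat.mul_div_cancel' hdn]
          have : p ^ 2 ∣ d := hcop.dvd_of_dvd_mul_right hdvd
          exact hp.one_lt.ne' (Nat.isUnit_iff.mp (hsq p (by rwa [← sq])))
        exact_mod_cast congrArg (Nat.cast (R := ℤ))
          (gpf_eq hp (Nat.div_dvd_of_dvd hdn) hn0 hmax hpdvd)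
      rw [key 1 (Or.inl rfl), key (-1) (Or.inr rfl), card_filter_eq hn1, sub_self]
      exact dvd_zero _
    · -- n = p * m with p ∤ m
      set m := n / p with hmdef
      have hnm : n = p * m := (Nat.mul_div_cancel' hpn).symm
      have hm0 : m ≠ 0 := by
        rintro h; rw [h, mul_zero] at hnm; exact hn0 hnm
      have hpm : ¬ p ∣ m := fun h => h2 (by rw [hnm, sq]; exact mul_dvd_mul_left p h)
      have hmax' : ∀ q ∈ (p * m).primeFactors, q ≤ p := by rw [← hnm]; exact hmax
      have hA := prod_split hp hm0 hpm hmax' 1 (-1) (by norm_num) (Or.inl rfl)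
      have hB := prod_split hp hm0 hpm hmax' (-1) 1 (by norm_num) (Or.inr rfl)
      rw [← hnm] at hA hB
      rw [hA, hB]
      by_cases hm1 : m = 1
      · rw [hm1]
        have hnp : n = p := by rw [hnm, hm1, mul_one]
        have e1 : (Nat.divisors 1).filter (fun d => μ d = 1) = {1} := by
          rw [Nat.divisors_one, Finset.filter_singleton, if_pos moebius_apply_one]
        have e2 : (Nat.divisors 1).filter (fun d => μ d = (-1 : ℤ)) = ∅ := by
          rw [Nat.divisors_one, Finset.filter_singleton,
            if_neg (by rw [moebius_apply_one]; decide)]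
        rw [e1, e2]
        simp [gpf, hnp]
      · have hEO : (m.divisors.filter fun d => μ d = 1).card =
            (m.divisors.filter fun d => μ d = -1).card := card_filter_eq hm1
        have hmlt : m < n := by
          rw [hmdef]; exact Nat.div_lt_self (by omega) hp.one_lt
        have hm1' : 1 ≤ m := Nat.pos_of_ne_zero hm0
        have hIH := ih m hmlt hm1'
        have hEpos : 0 < (m.divisors.filter fun d => μ d = 1).card := by
          apply Finset.card_pos.mpr
          exact ⟨1, Finset.mem_filter.mpr ⟨Nat.one_mem_divisors.mpr hm0, moebius_apply_one⟩⟩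
        set E := (m.divisors.filter fun d => μ d = 1).card with hE
        rw [← hEO]
        have heq : (∏ d ∈ m.divisors.filter (fun d => μ d = -1), (gpf (m / d) : ℤ)) * (p:ℤ) ^ E -
            (∏ d ∈ m.divisors.filter (fun d => μ d = 1), (gpf (m / d) : ℤ)) * (p:ℤ) ^ E =
            (p:ℤ) ^ E * -((∏ d ∈ m.divisors.filter (fun d => μ d = 1), (gpf (m / d) : ℤ)) -
              (∏ d ∈ m.divisors.filter (fun d => μ d = -1), (gpf (m / d) : ℤ))) := by ring
        rw [heq]
        have hcast : (n : ℤ) = (p : ℤ) * (m : ℤ) := by exact_mod_cast hnm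
        rw [hcast]
        exact mul_dvd_mul (dvd_pow_self (p:ℤ) hEpos.ne') (Dvd.dvd.neg_right hIH)
end

section
/- Alladi's duality for the identity function: with s_1 = g_1 = 0, s_n = smallest prime factor of n and g_n = greatest prime factor of n for n > 1, we have s_n = -∑_{d∣n} μ(d) g_d and g_n = -∑_{d∣n} μ(d) s_d for all n ≥ 1. -/
open ArithmeticFunction

/-- min of a finset, 0 for empty. -/
noncomputable def fmin (S : Finset ℕ) : ℕ := if h : S.Nonempty then S.min' h else 0

lemma fmin_empty : fmin ∅ = 0 := by simp [fmin]

lemma fmin_of_nonempty {S : Finset ℕ} (h : S.Nonempty) : fmin S = S.min' h := by simp [fmin, h]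

lemma key_max (P : Finset ℕ) (hP : P.Nonempty) :
    ∑ S ∈ P.powerset, (-1:ℤ)^S.card * ((S.sup _root_.id : ℕ) : ℤ) = -(P.min' hP : ℤ) := by
  induction P using Finset.strongInduction with
  | _ P ih =>
    set m := P.max' hP with hm
    have hmem : m ∈ P := P.max'_mem hP
    set Q := P.erase m with hQ
    have hmQ : m ∉ Q := Finset.notMem_erase _ _
    have hPQ : P = insert m Q := by rw [hQ, Finset.insert_erase hmem]
    have hsub : ∀ S ∈ Q.powerset, S ⊆ P := fun S hS =>
      (Finset.mem_powerset.1 hS).trans (Finset.erase_subset _ _)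
    have hsupins : ∀ S ∈ Q.powerset, ((insert m S).sup _root_.id : ℕ) = m := by
      intro S hS
      rw [Finset.sup_insert]
      have : S.sup _root_.id ≤ m := Finset.sup_le fun x hx => P.le_max' x (hsub S hS hx)
      simpa [_root_.id] using sup_eq_left.2 this
    conv_lhs => rw [hPQ, Finset.sum_powerset_insert hmQ]
    have hsecond : ∑ S ∈ Q.powerset, (-1:ℤ)^(insert m S).card * (((insert m S).sup _root_.id : ℕ) : ℤ)
        = -(m : ℤ) * ∑ S ∈ Q.powerset, (-1:ℤ)^S.card := by
      rw [Finset.mul_sum]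
      refine Finset.sum_congr rfl fun S hS => ?_
      have hmS : m ∉ S := fun h => hmQ (Finset.mem_powerset.1 hS h)
      rw [Finset.card_insert_of_notMem hmS, hsupins S hS, pow_succ]
      ring
    rw [hsecond]
    rcases Finset.eq_empty_or_nonempty Q with hQe | hQne
    · have hPm : P = {m} := by rw [hPQ, hQe]; rfl
      have : P.min' hP = m := by
        refine le_antisymm (P.min'_le m hmem) (Finset.le_min' _ _ _ fun y hy => ?_)
        rw [hPm] at hy
        simp at hy
        omega
      rw [hQe, this]
      simp
    · have hQP : Q ⊂ P := Finset.erase_ssubset hmem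
      have hind := ih Q hQP hQne
      rw [Finset.sum_powerset_neg_one_pow_card_of_nonempty hQne, hind, mul_zero, add_zero]
      congr 1
      have h1 : P.min' hP ≤ Q.min' hQne :=
        P.min'_le _ (hsub _ (Finset.mem_powerset.2 (le_refl Q)) (Q.min'_mem hQne))
      have h2 : Q.min' hQne ≤ P.min' hP := by
        apply Q.min'_le
        have hne : P.min' hP ≠ m := by
          intro h
          obtain ⟨q, hq⟩ := hQne
          have hqP : q ∈ P := hsub _ (Finset.mem_powerset.2 (le_refl Q)) hq
          have h1' : P.min' hP ≤ q := P.min'_le _ hqP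
          have h2' : q ≤ m := P.le_max' _ hqP
          have : q = m := le_antisymm h2' (h ▸ h1')
          exact (Finset.ne_of_mem_erase hq) this
        exact Finset.mem_erase.2 ⟨hne, P.min'_mem hP⟩
      exact_mod_cast congrArg (Nat.cast (R := ℤ)) (le_antisymm h2 h1)

lemma key_min (P : Finset ℕ) (hP : P.Nonempty) :
    ∑ S ∈ P.powerset, (-1:ℤ)^S.card * (fmin S : ℤ) = -((P.sup _root_.id : ℕ) : ℤ) := by
  induction P using Finset.strongInduction with
  | _ P ih =>
    set m := P.min' hP with hm
    have hmem : m ∈ P := P.min'_mem hP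
    set Q := P.erase m with hQ
    have hmQ : m ∉ Q := Finset.notMem_erase _ _
    have hPQ : P = insert m Q := by rw [hQ, Finset.insert_erase hmem]
    have hsub : ∀ S ∈ Q.powerset, S ⊆ P := fun S hS =>
      (Finset.mem_powerset.1 hS).trans (Finset.erase_subset _ _)
    have hmins : ∀ S ∈ Q.powerset, fmin (insert m S) = m := by
      intro S hS
      have hne : (insert m S).Nonempty := Finset.insert_nonempty _ _
      rw [fmin_of_nonempty hne]
      apply le_antisymm
      · exact Finset.min'_le _ _ (Finset.mem_insert_self _ _)
      · apply Finset.le_min'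
        intro y hy
        rcases Finset.mem_insert.1 hy with rfl | hy
        · exact le_refl _
        · exact P.min'_le _ (hsub S hS hy)
    conv_lhs => rw [hPQ, Finset.sum_powerset_insert hmQ]
    have hsecond : ∑ S ∈ Q.powerset, (-1:ℤ)^(insert m S).card * (fmin (insert m S) : ℤ)
        = -(m : ℤ) * ∑ S ∈ Q.powerset, (-1:ℤ)^S.card := by
      rw [Finset.mul_sum]
      refine Finset.sum_congr rfl fun S hS => ?_
      have hmS : m ∉ S := fun h => hmQ (Finset.mem_powerset.1 hS h)
      rw [Finset.card_insert_of_notMem hmS, hmins S hS, pow_succ]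
      ring
    rw [hsecond]
    rcases Finset.eq_empty_or_nonempty Q with hQe | hQne
    · have hPm : P = {m} := by rw [hPQ, hQe]; rfl
      have : P.sup _root_.id = m := by rw [hPm]; simp
      rw [hQe, this]
      simp [fmin_empty]
    · have hQP : Q ⊂ P := Finset.erase_ssubset hmem
      have hind := ih Q hQP hQne
      rw [Finset.sum_powerset_neg_one_pow_card_of_nonempty hQne, hind, mul_zero, add_zero]
      congr 1
      have : P.sup _root_.id = Q.sup _root_.id := by
        rw [hPQ, Finset.sup_insert]
        obtain ⟨q, hq⟩ := hQne
        have hqP : q ∈ P := hsub _ (Finset.mem_powerset.2 (le_refl Q)) hq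
        have h1 : m ≤ q := P.min'_le _ hqP
        have h2 : q ≤ Q.sup _root_.id := Finset.le_sup (f := _root_.id) hq
        simpa [_root_.id] using sup_eq_right.2 (h1.trans h2)
      rw [this]


lemma squarefree_prod_primes {S : Finset ℕ} (hs : ∀ p ∈ S, p.Prime) :
    Squarefree (∏ p ∈ S, p) := by
  classical
  induction S using Finset.induction with
  | empty => simpa using squarefree_one
  | @insert p S hpS ih =>
    rw [Finset.prod_insert hpS]
    have hp := hs p (Finset.mem_insert_self _ _)
    have hS : ∀ q ∈ S, q.Prime := fun q hq => hs q (Finset.mem_insert_of_mem hq)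
    have hcop : Nat.Coprime p (∏ q ∈ S, q) :=
      Nat.Coprime.prod_right fun q hq =>
        (Nat.coprime_primes hp (hS q hq)).2 (fun h => hpS (h ▸ hq))
    exact (Nat.squarefree_mul hcop).2 ⟨hp.prime.squarefree, ih hS⟩

lemma prod_primes_ne_zero {S : Finset ℕ} (hs : ∀ p ∈ S, p.Prime) :
    (∏ p ∈ S, p) ≠ 0 :=
  Finset.prod_ne_zero_iff.2 fun p hp => (hs p hp).ne_zero

lemma card_factors_prod_primes {S : Finset ℕ} (hs : ∀ p ∈ S, p.Prime) :
    ArithmeticFunction.cardFactors (∏ p ∈ S, p) = S.card := by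
  have h0 := prod_primes_ne_zero hs
  have hsq := squarefree_prod_primes hs
  rw [← (ArithmeticFunction.cardDistinctFactors_eq_cardFactors_iff_squarefree h0).2 hsq]
  rw [ArithmeticFunction.cardDistinctFactors_apply, ← List.card_toFinset,
    Nat.toFinset_factors, Nat.primeFactors_prod hs]

lemma moebius_prod_primes {S : Finset ℕ} (hs : ∀ p ∈ S, p.Prime) :
    ArithmeticFunction.moebius (∏ p ∈ S, p) = (-1) ^ S.card := by
  rw [ArithmeticFunction.moebius_apply_of_squarefree (squarefree_prod_primes hs),
    card_factors_prod_primes hs]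

lemma gpf_eq_sup (n : ℕ) : gpf n = n.primeFactors.sup _root_.id := by
  rcases eq_or_ne n 1 with rfl | h
  · simp [gpf]
  · simp [gpf, h]

lemma spf_eq_fmin {n : ℕ} (hn : n ≠ 0) : spf n = fmin n.primeFactors := by
  rcases eq_or_ne n 1 with rfl | h
  · simp [spf, fmin]
  · have h1 : 1 < n := by omega
    have hne : n.primeFactors.Nonempty := (Nat.nonempty_primeFactors).2 h1
    rw [spf, if_neg h, fmin_of_nonempty hne]
    have hmem : n.minFac ∈ n.primeFactors :=
      Nat.mem_primeFactors.2 ⟨Nat.minFac_prime h, Nat.minFac_dvd n, hn⟩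
    refine le_antisymm ?_ (Finset.min'_le _ _ hmem)
    have hm := n.primeFactors.min'_mem hne
    rw [Nat.mem_primeFactors] at hm
    exact Nat.minFac_le_of_dvd hm.1.two_le hm.2.1

lemma gpf_prod_primes {S : Finset ℕ} (hs : ∀ p ∈ S, p.Prime) :
    gpf (∏ p ∈ S, p) = S.sup _root_.id := by
  rw [gpf_eq_sup, Nat.primeFactors_prod hs]

lemma spf_prod_primes {S : Finset ℕ} (hs : ∀ p ∈ S, p.Prime) :
    spf (∏ p ∈ S, p) = fmin S := by
  rw [spf_eq_fmin (prod_primes_ne_zero hs), Nat.primeFactors_prod hs]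

lemma sum_div_eq {n : ℕ} (hn : n ≠ 0) (f : ℕ → ℤ) :
    ∑ d ∈ n.divisors, ArithmeticFunction.moebius d * f d =
      ∑ S ∈ n.primeFactors.powerset, (-1:ℤ)^S.card * f (∏ p ∈ S, p) := by
  rw [← Finset.sum_filter_of_ne
    (fun d _ h => by_contra fun hsq =>
      h (by rw [ArithmeticFunction.moebius_eq_zero_of_not_squarefree hsq]; ring))]
  rw [Nat.sum_divisors_filter_squarefree hn]
  have hconv : (UniqueFactorizationMonoid.normalizedFactors n).toFinset = n.primeFactors := by
    rw [Nat.factors_eq, List.toFinset_coe, Nat.toFinset_factors]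
  rw [hconv]
  refine Finset.sum_congr rfl fun S hS => ?_
  have hs : ∀ p ∈ S, p.Prime := fun p hp =>
    Nat.prime_of_mem_primeFactors (Finset.mem_powerset.1 hS hp)
  have hval : S.val.prod = ∏ p ∈ S, p := by
    rw [Finset.prod_eq_multiset_prod]
    simp
  rw [hval, moebius_prod_primes hs]

theorem stmt12 :
    ∀ n : ℕ, 1 ≤ n →
      (spf n : ℤ) = -∑ d ∈ n.divisors, moebius d * (gpf d : ℤ) ∧
      (gpf n : ℤ) = -∑ d ∈ n.divisors, moebius d * (spf d : ℤ) := by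
  intro n hn
  have hn0 : n ≠ 0 := by omega
  have hprimes : ∀ S ∈ n.primeFactors.powerset, ∀ p ∈ S, p.Prime := fun S hS p hp =>
    Nat.prime_of_mem_primeFactors (Finset.mem_powerset.1 hS hp)
  rcases eq_or_ne n 1 with rfl | h1
  · simp [spf, gpf]
  · have h1' : 1 < n := by omega
    have hne : n.primeFactors.Nonempty := Nat.nonempty_primeFactors.2 h1'
    constructor
    · rw [sum_div_eq hn0 (fun d => (gpf d : ℤ))]
      have heq : ∑ S ∈ n.primeFactors.powerset, (-1:ℤ)^S.card * (gpf (∏ p ∈ S, p) : ℤ) =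
          ∑ S ∈ n.primeFactors.powerset, (-1:ℤ)^S.card * ((S.sup _root_.id : ℕ) : ℤ) :=
        Finset.sum_congr rfl fun S hS => by rw [gpf_prod_primes (hprimes S hS)]
      rw [heq, key_max _ hne, spf_eq_fmin hn0, fmin_of_nonempty hne, neg_neg]
    · rw [sum_div_eq hn0 (fun d => (spf d : ℤ))]
      have heq : ∑ S ∈ n.primeFactors.powerset, (-1:ℤ)^S.card * (spf (∏ p ∈ S, p) : ℤ) =
          ∑ S ∈ n.primeFactors.powerset, (-1:ℤ)^S.card * (fmin S : ℤ) :=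
        Finset.sum_congr rfl fun S hS => by rw [spf_prod_primes (hprimes S hS)]
      rw [heq, key_min _ hne, gpf_eq_sup, neg_neg]
end

section
/- For a squarefree integer n = p_1 p_2 ⋯ p_r with primes p_1 < p_2 < ⋯ < p_r and r ≥ 2, the Möbius-weighted sum of greatest prime factors satisfies ∑_{d∣n} μ(d) g_{n/d} = (-1)^{r-1} p_1, where g_1 = 0 and g_m is the greatest prime factor of m for m > 1. In particular, n does not divide this sum, so the greatest-prime-factor sequence fails the Gauss congruence at every squarefree n with at least two prime factors. -/
open ArithmeticFunction Finset

lemma gpf_prod (T : Finset ℕ) (hT : ∀ p ∈ T, p.Prime) :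
    gpf (∏ p ∈ T, p) = T.sup _root_.id := by
  rcases T.eq_empty_or_nonempty with rfl | hne
  · simp [gpf]
  · have hne1 : (∏ p ∈ T, p) ≠ 1 := by
      intro h
      have := Nat.primeFactors_prod hT
      rw [h] at this
      simp at this
      exact hne.ne_empty this.symm
    rw [gpf, if_neg hne1, Nat.primeFactors_prod hT]

lemma aux_sum : ∀ (k : ℕ) (P : Finset ℕ) (hP : P.Nonempty), P.card = k →
    ∑ T ∈ P.powerset, (-1 : ℤ) ^ T.card * ((T.sup _root_.id : ℕ) : ℤ) = -(P.min' hP : ℤ) := by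
  intro k
  induction k with
  | zero => intro P hP hc; simp [Finset.card_eq_zero.mp hc] at hP
  | succ k ih =>
    intro P hP hc
    rcases Nat.eq_zero_or_pos k with rfl | hk
    · obtain ⟨a, rfl⟩ := Finset.card_eq_one.mp hc
      conv_lhs => rw [show ({a} : Finset ℕ) = insert a ∅ from rfl,
        Finset.sum_powerset_insert (by simp)]
      simp
    · set m := P.max' hP with hm
      have hmP : m ∈ P := P.max'_mem hP
      set Q := P.erase m with hQ
      have hQcard : Q.card = k := by rw [hQ, Finset.card_erase_of_mem hmP, hc]; rfl
      have hQne : Q.Nonempty := Finset.card_pos.mp (hQcard ▸ hk)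
      have hmnotQ : m ∉ Q := Finset.notMem_erase _ _
      have hins : insert m Q = P := Finset.insert_erase hmP
      have hminP : P.min' hP ∈ Q := by
        rw [hQ, Finset.mem_erase]
        refine ⟨?_, P.min'_mem hP⟩
        have : P.min' hP < P.max' hP := Finset.min'_lt_max'_of_card P (by omega)
        omega
      have hminQ : Q.min' hQne = P.min' hP := by
        apply le_antisymm (Finset.min'_le _ _ hminP)
        exact Finset.min'_le _ _ (Finset.mem_of_mem_erase (Q.min'_mem hQne))
      conv_lhs => rw [← hins, Finset.sum_powerset_insert hmnotQ]
      have h2 : ∑ T ∈ Q.powerset, (-1 : ℤ) ^ (insert m T).card * (((insert m T).sup _root_.id : ℕ) : ℤ)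
          = ∑ T ∈ Q.powerset, (-1 : ℤ) ^ (T.card + 1) * (m : ℤ) := by
        apply Finset.sum_congr rfl
        intro T hT
        rw [Finset.mem_powerset] at hT
        have hmT : m ∉ T := fun h => hmnotQ (hT h)
        have hsup : (insert m T).sup _root_.id = m := by
          rw [Finset.sup_insert]
          refine sup_eq_left.mpr (Finset.sup_le fun x hx => ?_)
          exact Finset.le_max' P x (Finset.mem_of_mem_erase (hT hx))
        rw [Finset.card_insert_of_notMem hmT, hsup]
      rw [h2]
      have h3 : ∑ T ∈ Q.powerset, (-1 : ℤ) ^ (T.card + 1) * (m : ℤ)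
          = -(m : ℤ) * ∑ T ∈ Q.powerset, (-1 : ℤ) ^ T.card := by
        rw [Finset.mul_sum]; apply Finset.sum_congr rfl; intro T _; ring
      rw [h3, Finset.sum_powerset_neg_one_pow_card, if_neg hQne.ne_empty, mul_zero, add_zero,
        ih Q hQne hQcard, hminQ]

theorem stmt13 (n : ℕ) (hsq : Squarefree n) (hr : 2 ≤ n.primeFactors.card) :
    (∑ d ∈ n.divisors, moebius d * (gpf (n / d) : ℤ)) =
      (-1) ^ (n.primeFactors.card - 1) * (n.minFac : ℤ) ∧
    ¬ (n : ℤ) ∣ ∑ d ∈ n.divisors, moebius d * (gpf (n / d) : ℤ) := by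
  have hn0 : n ≠ 0 := hsq.ne_zero
  have hn1 : n ≠ 1 := by
    rintro rfl; simp at hr
  set P := n.primeFactors with hP
  set r := P.card with hrc
  have hprime : ∀ p ∈ P, p.Prime := fun p hp => Nat.prime_of_mem_primeFactors hp
  have key : (∑ d ∈ n.divisors, moebius d * (gpf (n / d) : ℤ)) =
      (-1) ^ (r - 1) * (n.minFac : ℤ) := by
    rw [← Nat.divisors_filter_squarefree_of_squarefree hsq,
      Nat.sum_divisors_filter_squarefree hn0]
    have hfac : (UniqueFactorizationMonoid.normalizedFactors n).toFinset = P := by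
      rw [Nat.factors_eq]; simp [hP]
    rw [hfac]
    have step1 : ∀ S ∈ P.powerset,
        moebius (S.val.prod) * (gpf (n / S.val.prod) : ℤ)
          = (-1 : ℤ) ^ S.card * (((P \ S).sup _root_.id : ℕ) : ℤ) := by
      intro S hS
      rw [Finset.mem_powerset] at hS
      have hSprime : ∀ p ∈ S, p.Prime := fun p hp => hprime p (hS hp)
      have hval : S.val.prod = ∏ p ∈ S, p := by
        rw [Finset.prod_eq_multiset_prod]; simp
      have hdvdn : (∏ p ∈ S, p) ∣ n := by
        calc (∏ p ∈ S, p) ∣ ∏ p ∈ P, p := Finset.prod_dvd_prod_of_subset _ _ _ hS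
          _ = n := Nat.prod_primeFactors_of_squarefree hsq
      have hsqS : Squarefree (∏ p ∈ S, p) := hsq.squarefree_of_dvd hdvdn
      have hmu : moebius (∏ p ∈ S, p) = (-1 : ℤ) ^ S.card := by
        rw [moebius_apply_of_squarefree hsqS]
        congr 1
        rw [← (cardDistinctFactors_eq_cardFactors_iff_squarefree hsqS.ne_zero).mpr hsqS,
          cardDistinctFactors_apply, ← List.card_toFinset, Nat.toFinset_factors,
          Nat.primeFactors_prod hSprime]
      have hdiv : n / (∏ p ∈ S, p) = ∏ p ∈ (P \ S), p :=
        (Nat.prod_primeFactors_sdiff_of_squarefree hsq hS).symm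
      rw [hval, hmu, hdiv, gpf_prod _ (fun p hp => hprime p (Finset.mem_sdiff.mp hp).1)]
    rw [Finset.sum_congr rfl step1]
    have step2 : ∑ S ∈ P.powerset, (-1 : ℤ) ^ S.card * (((P \ S).sup _root_.id : ℕ) : ℤ)
        = ∑ T ∈ P.powerset, (-1 : ℤ) ^ (P \ T).card * ((T.sup _root_.id : ℕ) : ℤ) := by
      apply Finset.sum_nbij' (fun S => P \ S) (fun T => P \ T)
      · intro S hS; rw [Finset.mem_powerset] at *; exact Finset.sdiff_subset
      · intro T hT; rw [Finset.mem_powerset] at *; exact Finset.sdiff_subset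
      · intro S hS; rw [Finset.mem_powerset] at hS; exact Finset.sdiff_sdiff_eq_self hS
      · intro T hT; rw [Finset.mem_powerset] at hT; exact Finset.sdiff_sdiff_eq_self hT
      · intro S hS; rw [Finset.mem_powerset] at hS
        rw [Finset.sdiff_sdiff_eq_self hS]
    rw [step2]
    have step3 : ∀ T ∈ P.powerset, (-1 : ℤ) ^ (P \ T).card * ((T.sup _root_.id : ℕ) : ℤ)
        = (-1 : ℤ) ^ r * ((-1 : ℤ) ^ T.card * ((T.sup _root_.id : ℕ) : ℤ)) := by
      intro T hT
      rw [Finset.mem_powerset] at hT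
      have hcard : (P \ T).card + T.card = r := by
        rw [Finset.card_sdiff_of_subset hT]
        exact Nat.sub_add_cancel (Finset.card_le_card hT)
      have : (-1 : ℤ) ^ (P \ T).card * (-1 : ℤ) ^ T.card = (-1) ^ r := by
        rw [← pow_add, hcard]
      have h4 : (-1 : ℤ) ^ (P \ T).card = (-1) ^ r * (-1) ^ T.card := by
        have hsq' : ((-1 : ℤ) ^ T.card) * ((-1 : ℤ) ^ T.card) = 1 := by
          rw [← pow_add, ← two_mul, pow_mul]; norm_num
        calc (-1 : ℤ) ^ (P \ T).card = (-1 : ℤ) ^ (P \ T).card * (((-1 : ℤ) ^ T.card) * ((-1 : ℤ) ^ T.card)) := by rw [hsq', mul_one]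
          _ = (-1) ^ r * (-1) ^ T.card := by rw [← mul_assoc, this]
      rw [h4]; ring
    rw [Finset.sum_congr rfl step3, ← Finset.mul_sum]
    have hPne : P.Nonempty := Finset.card_pos.mp (by omega)
    rw [aux_sum r P hPne rfl]
    have hmin : P.min' hPne = n.minFac := by
      apply le_antisymm
      · apply Finset.min'_le
        exact Nat.mem_primeFactors.mpr ⟨Nat.minFac_prime hn1, Nat.minFac_dvd n, hn0⟩
      · exact Nat.minFac_le_of_dvd (hprime _ (P.min'_mem hPne)).two_le
          (Nat.dvd_of_mem_primeFactors (P.min'_mem hPne))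
    rw [hmin]
    have : (-1 : ℤ) ^ r = (-1) ^ (r - 1) * (-1) := by
      rw [← pow_succ]; congr 1; omega
    rw [this]; ring
  refine ⟨key, ?_⟩
  rw [key]
  intro hdvd
  have hdvd' : (n : ℤ) ∣ (n.minFac : ℤ) := by
    have h5 : ((-1:ℤ))^(r-1) * ((-1:ℤ)^(r-1) * (n.minFac : ℤ)) = (n.minFac : ℤ) := by
      rw [← mul_assoc, ← pow_add, ← two_mul, pow_mul]; norm_num
    exact h5 ▸ hdvd.mul_left _
  rw [Int.natCast_dvd_natCast] at hdvd'
  have heq : n = n.minFac := Nat.dvd_antisymm hdvd' (Nat.minFac_dvd n)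
  have hpn : n.Prime := heq ▸ Nat.minFac_prime hn1
  have hh : 2 ≤ ({n} : Finset ℕ).card := by rw [← hpn.primeFactors]; exact hr
  simp at hh
end

section
/- For a squarefree integer n = p_1 p_2 ⋯ p_r with primes p_1 < p_2 < ⋯ < p_r and r ≥ 2, we have ∑_{d∣n} μ(d) s_{n/d} = (-1)^{r-1} p_r, where s_1 = 0 and s_m is the smallest prime factor of m for m > 1. Hence the smallest-prime-factor sequence fails the Gauss congruence at every composite squarefree n. -/
open ArithmeticFunction

theorem stmt14 (n : ℕ) (hsq : Squarefree n) (hr : 2 ≤ n.primeFactors.card) :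
    (∑ d ∈ n.divisors, moebius d * (spf (n / d) : ℤ)) =
      (-1) ^ (n.primeFactors.card - 1) * (gpf n : ℤ) ∧
    ¬ (n : ℤ) ∣ ∑ d ∈ n.divisors, moebius d * (spf (n / d) : ℤ) := by
  have hn0 : n ≠ 0 := hsq.ne_zero
  have hn1 : n ≠ 1 := by rintro rfl; simp at hr
  set p := n.primeFactors.sup _root_.id with hpdef
  have hne : n.primeFactors.Nonempty := Finset.card_pos.mp (by omega)
  have hpmem : p ∈ n.primeFactors := by
    obtain ⟨q, hq, hq2⟩ := Finset.exists_mem_eq_sup n.primeFactors hne _root_.id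
    rw [hpdef, hq2]; exact hq
  have hp : p.Prime := Nat.prime_of_mem_primeFactors hpmem
  have hpn : p ∣ n := Nat.dvd_of_mem_primeFactors hpmem
  set m := n / p with hmdef
  have hmp : m * p = n := Nat.div_mul_cancel hpn
  have hpm : ¬ p ∣ m := by
    intro h
    have : p * p ∣ n := by rw [← hmp]; exact mul_dvd_mul h dvd_rfl
    exact hp.ne_one (Nat.isUnit_iff.mp (hsq p this))
  have hm0 : m ≠ 0 := by intro h; rw [h, zero_mul] at hmp; exact hn0 hmp.symm
  have hmsq : Squarefree m := hsq.squarefree_of_dvd ⟨p, hmp.symm⟩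
  have hpfn : n.primeFactors = m.primeFactors ∪ {p} := by
    rw [← hmp, Nat.primeFactors_mul hm0 hp.ne_zero, hp.primeFactors]
  have hpnotm : p ∉ m.primeFactors := fun h => hpm (Nat.dvd_of_mem_primeFactors h)
  have hcard : m.primeFactors.card = n.primeFactors.card - 1 := by
    rw [hpfn, Finset.card_union_of_disjoint (by simpa using hpnotm)]
    simp
  have hm1 : m ≠ 1 := by
    intro h
    rw [h, one_mul] at hmp
    rw [← hmp, hp.primeFactors] at hr
    simp at hr
  -- prime factors of m are < p
  have hlt : ∀ q ∈ m.primeFactors, q < p := by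
    intro q hq
    have hqn : q ∈ n.primeFactors := by rw [hpfn]; exact Finset.mem_union_left _ hq
    have hle : q ≤ p := Finset.le_sup (f := _root_.id) hqn
    rcases lt_or_eq_of_le hle with h | h
    · exact h
    · exact absurd (h ▸ hq) hpnotm
  -- key spf fact
  have hspf : ∀ e, e ∣ m → e ≠ 1 → spf (e * p) = spf e := by
    intro e he he1
    have he0 : e ≠ 0 := fun h => hm0 (by simpa [h] using (zero_dvd_iff.mp (h ▸ he)))
    have hminprime : e.minFac.Prime := Nat.minFac_prime he1
    have hminm : e.minFac ∈ m.primeFactors :=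
      Nat.mem_primeFactors.mpr ⟨hminprime, (Nat.minFac_dvd e).trans he, hm0⟩
    have hminlt : e.minFac < p := hlt _ hminm
    have hep1 : e * p ≠ 1 := by
      intro h
      exact hp.ne_one (Nat.eq_one_of_mul_eq_one_left h)
    have h1 : (e * p).minFac ≤ e.minFac :=
      Nat.minFac_le_of_dvd hminprime.two_le ((Nat.minFac_dvd e).trans (dvd_mul_right e p))
    have h2 : e.minFac ≤ (e * p).minFac := by
      have hdvd : (e * p).minFac ∣ e * p := Nat.minFac_dvd _
      have hprime : (e * p).minFac.Prime := Nat.minFac_prime hep1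
      rcases (Nat.Prime.dvd_mul hprime).mp hdvd with h | h
      · exact Nat.minFac_le_of_dvd hprime.two_le h
      · have : (e * p).minFac = p := (Nat.prime_dvd_prime_iff_eq hprime hp).mp h
        omega
    simp only [spf, if_neg hep1, if_neg he1]
    omega
  have hspfp : spf p = p := by
    simp only [spf, if_neg hp.ne_one]
    exact Nat.Prime.minFac_eq hp
  -- rewrite the sum
  have hsum1 : (∑ d ∈ n.divisors, moebius d * (spf (n / d) : ℤ))
      = ∑ e ∈ n.divisors, moebius (n / e) * (spf e : ℤ) := by
    rw [← Nat.sum_div_divisors n (fun e => moebius (n / e) * (spf e : ℤ))]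
    refine Finset.sum_congr rfl ?_
    intro d hd
    rw [Nat.div_div_self (Nat.mem_divisors.mp hd).1 hn0]
  have hdiveq : n.divisors = m.divisors ∪ m.divisors.image (· * p) := by
    ext d
    simp only [Nat.mem_divisors, Finset.mem_union, Finset.mem_image]
    constructor
    · rintro ⟨hd, -⟩
      by_cases hpd : p ∣ d
      · obtain ⟨e, rfl⟩ := hpd
        right
        refine ⟨e, ⟨?_, hm0⟩, mul_comm e p⟩
        have : e * p ∣ m * p := by rwa [hmp, mul_comm]
        exact (Nat.mul_dvd_mul_iff_right hp.pos).mp this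
      · left
        refine ⟨?_, hm0⟩
        have hcop : Nat.Coprime d p := Nat.Coprime.symm (hp.coprime_iff_not_dvd.mpr hpd)
        exact (Nat.Coprime.dvd_of_dvd_mul_right hcop) (hmp ▸ hd)
    · rintro (⟨hd, -⟩ | ⟨e, ⟨he, -⟩, rfl⟩)
      · exact ⟨hd.trans ⟨p, hmp.symm⟩, hn0⟩
      · exact ⟨by rw [← hmp]; exact mul_dvd_mul he dvd_rfl, hn0⟩
  have hdisj : Disjoint m.divisors (m.divisors.image (· * p)) := by
    rw [Finset.disjoint_right]
    rintro d hd hd2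
    obtain ⟨e, he, rfl⟩ := Finset.mem_image.mp hd
    exact hpm ((dvd_mul_left p e).trans (Nat.mem_divisors.mp hd2).1)
  have hinj : Set.InjOn (· * p) m.divisors := fun a _ b _ h =>
    Nat.eq_of_mul_eq_mul_right hp.pos h
  have hndivep : ∀ e ∈ m.divisors, n / (e * p) = m / e := by
    intro e he
    rw [← hmp, Nat.mul_div_mul_right _ _ hp.pos]
  have hndive : ∀ e ∈ m.divisors, n / e = (m / e) * p := by
    intro e he
    rw [← hmp, mul_comm m p, Nat.mul_div_assoc p (Nat.mem_divisors.mp he).1, mul_comm]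
  have hmoeb : ∀ e ∈ m.divisors, (moebius ((m / e) * p) : ℤ) = - moebius (m / e) := by
    intro e he
    have hcop : Nat.Coprime (m / e) p := by
      have : ¬ p ∣ m / e := fun h => hpm (h.trans (Nat.div_dvd_of_dvd (Nat.mem_divisors.mp he).1))
      exact Nat.Coprime.symm (hp.coprime_iff_not_dvd.mpr this)
    rw [isMultiplicative_moebius.map_mul_of_coprime hcop, moebius_apply_prime hp]
    ring
  have hsum2 : (∑ e ∈ n.divisors, moebius (n / e) * (spf e : ℤ))
      = (∑ e ∈ m.divisors, moebius (n / e) * (spf e : ℤ))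
        + ∑ e ∈ m.divisors, moebius (n / (e * p)) * (spf (e * p) : ℤ) := by
    rw [hdiveq, Finset.sum_union hdisj, Finset.sum_image hinj]
  have hA : (∑ e ∈ m.divisors, moebius (n / e) * (spf e : ℤ))
      = - ∑ e ∈ m.divisors, moebius (m / e) * (spf e : ℤ) := by
    rw [← Finset.sum_neg_distrib]
    refine Finset.sum_congr rfl ?_
    intro e he
    rw [hndive e he, hmoeb e he]
    ring
  have hB : (∑ e ∈ m.divisors, moebius (n / (e * p)) * (spf (e * p) : ℤ))
      = (∑ e ∈ m.divisors, moebius (m / e) * (spf e : ℤ)) + moebius m * p := by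
    have : ∀ e ∈ m.divisors,
        moebius (n / (e * p)) * (spf (e * p) : ℤ)
          - moebius (m / e) * (spf e : ℤ)
          = if e = 1 then moebius m * p else 0 := by
      intro e he
      rw [hndivep e he]
      by_cases he1 : e = 1
      · subst he1
        simp [spf, if_neg hp.ne_one, hspfp, Nat.Prime.minFac_eq hp]
      · rw [hspf e (Nat.mem_divisors.mp he).1 he1, if_neg he1]
        ring
    have h2 := Finset.sum_congr rfl this
    rw [Finset.sum_sub_distrib, Finset.sum_ite_eq' m.divisors 1
      (fun _ => (moebius m * p : ℤ))] at h2
    rw [if_pos (Nat.one_mem_divisors.mpr hm0)] at h2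
    linarith
  have hmoebm : (moebius m : ℤ) = (-1) ^ (n.primeFactors.card - 1) := by
    rw [moebius_apply_of_squarefree hmsq,
      ← (cardDistinctFactors_eq_cardFactors_iff_squarefree hm0).mpr hmsq,
      cardDistinctFactors_apply, ← hcard]
    congr 1
  have hgpf : (gpf n : ℤ) = p := by simp [gpf, if_neg hn1, hpdef]
  have hmain : (∑ d ∈ n.divisors, moebius d * (spf (n / d) : ℤ))
      = (-1) ^ (n.primeFactors.card - 1) * (gpf n : ℤ) := by
    rw [hsum1, hsum2, hA, hB, hgpf, hmoebm]; ring
  refine ⟨hmain, ?_⟩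
  rw [hmain]
  intro hdvd
  have hm2 : 2 ≤ m := (Nat.two_le_iff m).mpr ⟨hm0, hm1⟩
  have hpltn : p < n := by
    have h1 : 2 * p ≤ m * p := Nat.mul_le_mul_right p hm2
    have h2 := hp.pos
    omega
  have habs : ((-1 : ℤ) ^ (n.primeFactors.card - 1) * (gpf n : ℤ)).natAbs = p := by
    rw [Int.natAbs_mul, Int.natAbs_pow]
    simp [hgpf]
  have := Int.natAbs_dvd_natAbs.mpr hdvd
  rw [habs, Int.natAbs_natCast] at this
  have := Nat.le_of_dvd hp.pos this
  omega
end

section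
/- A polynomial sequence (a_n(q)) in ℤ[q] satisfies the q-Gauss congruence ∑_{d∣n} μ(d) a_{n/d}(q^d) ≡ 0 (mod [n]_q) for all n ≥ 1 if and only if there exists a sequence (g_n(q)) in ℤ[q] such that a_n(q) = ∑_{d∣n} [n/d]_{q^d} · g_{n/d}(q^d) for all n ≥ 1. -/
open ArithmeticFunction Polynomial Finset

lemma sum_moeb (m : ℕ) : (∑ d ∈ m.divisors, (moebius d : ℤ)) = if m = 1 then 1 else 0 := by
  have h := congrArg (fun f : ArithmeticFunction ℤ => f m) moebius_mul_coe_zeta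
  simp only [mul_apply, one_apply] at h
  rw [← h, ← Nat.sum_divisorsAntidiagonal (fun x _ => (moebius x : ℤ))]
  refine Finset.sum_congr rfl fun p hp => ?_
  have := Nat.right_ne_zero_of_mem_divisorsAntidiagonal hp
  simp [this]

lemma comp_comp_pow (p : Polynomial ℤ) (d e : ℕ) :
    (p.comp (X ^ e)).comp (X ^ d) = p.comp (X ^ (d * e)) := by
  rw [Polynomial.comp_assoc, Polynomial.X_pow_comp, ← pow_mul]

lemma divisors_pair (n : ℕ) (f : ℕ → ℕ → Polynomial ℤ) :
    (∑ d ∈ n.divisors, ∑ e ∈ (n / d).divisors, f d e)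
  = ∑ m ∈ n.divisors, ∑ p ∈ m.divisorsAntidiagonal, f p.1 p.2 := by
  rw [Finset.sum_sigma', Finset.sum_sigma']
  refine Finset.sum_nbij' (fun i => ⟨i.1 * i.2, (i.1, i.2)⟩) (fun i => ⟨i.2.1, i.2.2⟩)
    ?_ ?_ ?_ ?_ ?_
  · rintro ⟨d, e⟩ hde
    simp only [Finset.mem_sigma, Nat.mem_divisors, Nat.mem_divisorsAntidiagonal] at hde ⊢
    obtain ⟨⟨hd, hn⟩, he, hnd⟩ := hde
    have hde' : d * e ∣ n := by
      have := Nat.mul_dvd_mul_left d he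
      rwa [Nat.mul_div_cancel' hd] at this
    have hd0 : d ≠ 0 := by rintro rfl; exact hn (Nat.eq_zero_of_zero_dvd hd)
    have he0 : e ≠ 0 := by rintro rfl; exact hnd (Nat.eq_zero_of_zero_dvd he)
    exact ⟨⟨hde', hn⟩, trivial, Nat.mul_ne_zero hd0 he0⟩
  · rintro ⟨m, d, e⟩ hm
    simp only [Finset.mem_sigma, Nat.mem_divisors, Nat.mem_divisorsAntidiagonal] at hm ⊢
    obtain ⟨⟨hmn, hn⟩, hde, hm0⟩ := hm
    have hd : d ∣ n := dvd_trans ⟨e, hde.symm⟩ hmn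
    have he : e ∣ n / d := by
      rw [Nat.dvd_div_iff_mul_dvd hd]
      exact hde ▸ hmn
    have hd0 : d ≠ 0 := by rintro rfl; rw [zero_mul] at hde; exact hm0 hde.symm
    have hnd : n / d ≠ 0 := by
      have : 0 < n / d := Nat.div_pos (Nat.le_of_dvd (Nat.pos_of_ne_zero hn) hd)
        (Nat.pos_of_ne_zero hd0)
      omega
    exact ⟨⟨hd, hn⟩, he, hnd⟩
  · rintro ⟨d, e⟩ _; rfl
  · rintro ⟨m, d, e⟩ hm
    simp only [Finset.mem_sigma, Nat.mem_divisorsAntidiagonal] at hm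
    have : d * e = m := hm.2.1
    subst this; rfl
  · rintro ⟨d, e⟩ _; rfl

lemma collapse (n : ℕ) (hn : n ≠ 0) (F : ℕ → Polynomial ℤ) (c : ℕ → ℕ → ℤ)
    (hc : ∀ m : ℕ, m ≠ 0 →
      (∑ p ∈ m.divisorsAntidiagonal, c p.1 p.2) = if m = 1 then 1 else 0) :
    (∑ d ∈ n.divisors, ∑ e ∈ (n / d).divisors,
      C (c d e) * (F (n / (d * e))).comp (X ^ (d * e))) = F n := by
  rw [divisors_pair]
  have key : ∀ m ∈ n.divisors,
      (∑ p ∈ m.divisorsAntidiagonal, C (c p.1 p.2) * (F (n / (p.1 * p.2))).comp (X ^ (p.1 * p.2)))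
      = if m = 1 then F n else 0 := by
    intro m hm
    obtain ⟨hmn, hn0⟩ := Nat.mem_divisors.mp hm
    have hm0 : m ≠ 0 := by rintro rfl; exact hn0 (Nat.eq_zero_of_zero_dvd hmn)
    have step : (∑ p ∈ m.divisorsAntidiagonal,
        C (c p.1 p.2) * (F (n / (p.1 * p.2))).comp (X ^ (p.1 * p.2)))
        = (∑ p ∈ m.divisorsAntidiagonal, C (c p.1 p.2)) * (F (n / m)).comp (X ^ m) := by
      rw [Finset.sum_mul]
      refine Finset.sum_congr rfl fun p hp => ?_
      rw [(Nat.mem_divisorsAntidiagonal.mp hp).1]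
    rw [step, ← map_sum, hc m hm0]
    split_ifs with h1
    · subst h1; simp
    · simp
  rw [Finset.sum_congr rfl key, Finset.sum_ite_eq' n.divisors 1 (fun _ => F n),
    if_pos (Nat.one_mem_divisors.mpr hn)]

/-- The `q`-integer `[k]_q = 1 + q + ⋯ + q^(k-1)` as a polynomial in `ℤ[q]`. -/
noncomputable def qInt (k : ℕ) : Polynomial ℤ := ∑ i ∈ Finset.range k, X ^ i

theorem stmt18 (a : ℕ → Polynomial ℤ) :
    (∀ n : ℕ, 1 ≤ n →
      qInt n ∣ ∑ d ∈ n.divisors, C (moebius d : ℤ) * (a (n / d)).comp (X ^ d)) ↔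
    ∃ g : ℕ → Polynomial ℤ, ∀ n : ℕ, 1 ≤ n →
      a n = ∑ d ∈ n.divisors, (qInt (n / d)).comp (X ^ d) * (g (n / d)).comp (X ^ d) := by
  set b : ℕ → Polynomial ℤ :=
    fun n => ∑ d ∈ n.divisors, C (moebius d : ℤ) * (a (n / d)).comp (X ^ d) with hb
  constructor
  · intro h
    have H : ∀ n : ℕ, 1 ≤ n → ∃ p : Polynomial ℤ, b n = qInt n * p := fun n hn => h n hn
    choose g' hg' using H
    refine ⟨fun n => if hn : 1 ≤ n then g' n hn else 0, fun n hn => ?_⟩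
    have hn0 : n ≠ 0 := by omega
    have inv : a n = ∑ d ∈ n.divisors, (b (n / d)).comp (X ^ d) := by
      have hcol := collapse n hn0 a (fun _ e => (moebius e : ℤ)) (fun m hm => by
        rw [Nat.sum_divisorsAntidiagonal' (f := fun _ y => (moebius y : ℤ))]
        exact sum_moeb m)
      rw [← hcol]
      refine Finset.sum_congr rfl fun d hd => ?_
      simp only [hb, Polynomial.sum_comp]
      refine Finset.sum_congr rfl fun e he => ?_
      rw [mul_comp, C_comp, comp_comp_pow, Nat.div_div_eq_div_mul]
    rw [inv]
    refine Finset.sum_congr rfl fun d hd => ?_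
    obtain ⟨hdn, hn0'⟩ := Nat.mem_divisors.mp hd
    have hd1 : 1 ≤ n / d := Nat.div_pos (Nat.le_of_dvd (by omega) hdn)
      (Nat.pos_of_ne_zero (by rintro rfl; exact hn0 (Nat.eq_zero_of_zero_dvd hdn)))
    rw [hg' (n / d) hd1, mul_comp]
    simp [hd1]
  · rintro ⟨g, hg⟩ n hn
    have hn0 : n ≠ 0 := by omega
    have hcol := collapse n hn0 (fun m => qInt m * g m) (fun d _ => (moebius d : ℤ))
      (fun m hm => by
        rw [Nat.sum_divisorsAntidiagonal (f := fun x _ => (moebius x : ℤ))]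
        exact sum_moeb m)
    beta_reduce at hcol
    refine ⟨g n, ?_⟩
    rw [← hcol]
    refine Finset.sum_congr rfl fun d hd => ?_
    obtain ⟨hdn, _⟩ := Nat.mem_divisors.mp hd
    have hd1 : 1 ≤ n / d := Nat.div_pos (Nat.le_of_dvd (by omega) hdn)
      (Nat.pos_of_ne_zero (by rintro rfl; exact hn0 (Nat.eq_zero_of_zero_dvd hdn)))
    rw [hg (n / d) hd1, Polynomial.sum_comp, Finset.mul_sum]
    refine Finset.sum_congr rfl fun e he => ?_
    rw [mul_comp, comp_comp_pow, comp_comp_pow, Nat.div_div_eq_div_mul, mul_comp]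
end
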